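/- arXiv:1202.5802 — 4 statements merged into one kernel-verified Lean document; each statement's English description precedes it below -/
import Mathlib

section
/- Assume εΓε = Γ, where ε = [[−1,0],[0,1]]. For f ∈ S_k(Γ), the function f*(z) = conj(f(−conj(z))) is again a cusp form in S_k(Γ), and conj(ρ_{f*}) = (−1)^{w+1}·(ρ_f|ε), where conj acts by conjugating all coefficients of each polynomial component. -/
noncomputable section

open Matrix Polynomial Finset Filter MeasureTheory

abbrev SL2Z := Matrix.SpecialLinearGroup (Fin 2) ℤ

def mc (g : SL2Z) (i j : Fin 2) : ℂ := ((g : Matrix (Fin 2) (Fin 2) ℤ) i j : ℂ)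

def Sm : SL2Z := ⟨!![0, -1; 1, 0], by norm_num [Matrix.det_fin_two_of]⟩
def Tm : SL2Z := ⟨!![1, 1; 0, 1], by norm_num [Matrix.det_fin_two_of]⟩
def Um : SL2Z := Tm * Sm

def negSL (A : SL2Z) : SL2Z := ⟨-A.1, by simp [Matrix.det_neg, A.2]⟩

/-- weight `-w` right action of `g` on polynomials of degree at most `w`:
`(P|g)(X) = (cX+d)^w P((aX+b)/(cX+d))`. -/
def pSlash (w : ℕ) (P : Polynomial ℂ) (g : SL2Z) : Polynomial ℂ :=
  ∑ n ∈ Finset.range (w + 1),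
    C (P.coeff n) * (C (mc g 0 0) * X + C (mc g 0 1)) ^ n *
      (C (mc g 1 0) * X + C (mc g 1 1)) ^ (w - n)

/-- right action of `g` on families `P : Γ₁ → V_w`: `(P|g)(A) = P(Ag⁻¹)|g`. -/
def famSlash (w : ℕ) (P : SL2Z → Polynomial ℂ) (g : SL2Z) : SL2Z → Polynomial ℂ :=
  fun A => pSlash w (P (A * g⁻¹)) g

/-- membership in the induced module `V_w^Γ`. -/
structure MemV (Γ : Subgroup SL2Z) (w : ℕ) (P : SL2Z → Polynomial ℂ) : Prop where
  deg : ∀ A, (P A).degree ≤ (w : ℕ)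
  inv : ∀ γ ∈ Γ, ∀ A, P (γ * A) = P A
  parity : ∀ A, P (negSL A) = (-1 : ℂ) ^ w • P A

/-- the space of period polynomials `W_w^Γ`. -/
def MemW (Γ : Subgroup SL2Z) (w : ℕ) (P : SL2Z → Polynomial ℂ) : Prop :=
  MemV Γ w P ∧ (∀ A, P A + famSlash w P Sm A = 0) ∧
    (∀ A, P A + famSlash w P Um A + famSlash w P (Um * Um) A = 0)

/-- the space of coboundary polynomials `C_w^Γ = {P|(1-S) : P ∈ V_w^Γ, P|T = P}`. -/
def MemC (Γ : Subgroup SL2Z) (w : ℕ) (Q : SL2Z → Polynomial ℂ) : Prop :=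
  ∃ P, MemV Γ w P ∧ (∀ A, famSlash w P Tm A = P A) ∧ ∀ A, Q A = P A - famSlash w P Sm A

def uhp : Set ℂ := {z | 0 < z.im}

/-- the weight `k` slash action on functions. -/
def slashk (k : ℤ) (g : SL2Z) (f : ℂ → ℂ) : ℂ → ℂ := fun z =>
  (mc g 1 0 * z + mc g 1 1) ^ (-k) *
    f ((mc g 0 0 * z + mc g 0 1) / (mc g 1 0 * z + mc g 1 1))

/-- cusp forms of weight `k` for `Γ`. -/
structure IsCuspForm (Γ : Subgroup SL2Z) (k : ℤ) (f : ℂ → ℂ) : Prop where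
  holo : DifferentiableOn ℂ f uhp
  trans : ∀ γ ∈ Γ, ∀ z ∈ uhp, slashk k γ f z = f z
  decay : ∀ A : SL2Z, Tendsto (slashk k A f) (Filter.comap Complex.im atTop) (nhds 0)

/-- the period polynomial `ρ_f(A) = ∫₀^{i∞} (f|A)(t)(t-X)^w dt`, via its coefficients. -/
def rho (k : ℤ) (w : ℕ) (f : ℂ → ℂ) (A : SL2Z) : Polynomial ℂ :=
  ∑ m ∈ Finset.range (w + 1),
    C ((-1 : ℂ) ^ m * (w.choose m : ℂ) * Complex.I ^ (w - m + 1) *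
        ∫ y in Set.Ioi (0 : ℝ), slashk k A f (Complex.I * y) * (y : ℂ) ^ (w - m)) * X ^ m

/-- the pairing `⟨·,·⟩` on `V_w`. -/
def pairV (w : ℕ) (P Q : Polynomial ℂ) : ℂ :=
  ∑ n ∈ Finset.range (w + 1),
    (-1 : ℂ) ^ (w - n) * ((w.choose n : ℂ))⁻¹ * P.coeff n * Q.coeff (w - n)

/-- the pairing `⟪·,·⟫` on `V_w^Γ`, w.r.t. a set `Rt` of coset representatives for `Γ\Γ₁`. -/
def pairG (Γ : Subgroup SL2Z) (w : ℕ) (Rt : Finset SL2Z) (P Q : SL2Z → Polynomial ℂ) : ℂ :=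
  ((Γ.index : ℂ))⁻¹ * ∑ A ∈ Rt, pairV w (P A) (Q A)

/-- the pairing `{P,Q} = ⟪P|(T-T⁻¹),Q⟫`. -/
def brk (Γ : Subgroup SL2Z) (w : ℕ) (Rt : Finset SL2Z) (P Q : SL2Z → Polynomial ℂ) : ℂ :=
  pairG Γ w Rt (fun A => famSlash w P Tm A - famSlash w P Tm⁻¹ A) Q

/-- `Rt` is a set of representatives for the right cosets `Γ\Γ₁`. -/
def IsTransversal (Γ : Subgroup SL2Z) (Rt : Finset SL2Z) : Prop :=
  Subgroup.IsComplement (Γ : Set SL2Z) (Rt : Set SL2Z)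

/-- the standard fundamental domain for `SL₂(ℤ)` in the upper half plane. -/
def fundDom : Set ℂ := {z | 0 < z.im ∧ 1 ≤ ‖z‖ ∧ |z.re| ≤ 1 / 2}

/-- the Petersson product w.r.t. a set `Rt` of coset representatives for `Γ\Γ₁`. -/
def petersson (Γ : Subgroup SL2Z) (k : ℤ) (Rt : Finset SL2Z) (f g : ℂ → ℂ) : ℂ :=
  ((Γ.index : ℂ))⁻¹ * ∑ A ∈ Rt, ∫ z in fundDom,
    slashk k A f z * (starRingEnd ℂ) (slashk k A g z) * (z.im : ℂ) ^ (k - 2)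

def Ck (k : ℤ) : ℂ := -(2 * Complex.I) ^ (k - 1)

/-- conjugation of `A` by `ε = [[-1,0],[0,1]]`. -/
def epsConj (A : SL2Z) : SL2Z :=
  ⟨!![A.1 0 0, -A.1 0 1; -A.1 1 0, A.1 1 1], by
    have h := A.2
    rw [Matrix.det_fin_two] at h
    rw [Matrix.det_fin_two_of]
    linear_combination h⟩

/-- the involution `(P|ε)(A)(X) = P(εAε)(-X)` of `V_w^Γ`. -/
def epsAct (w : ℕ) (P : SL2Z → Polynomial ℂ) : SL2Z → Polynomial ℂ :=
  fun A => (P (epsConj A)).comp (-X)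

/-- `P^± = (P ± P|ε)/2`, where `s = ±1`. -/
def pm (w : ℕ) (s : ℂ) (P : SL2Z → Polynomial ℂ) : SL2Z → Polynomial ℂ :=
  fun A => (2 : ℂ)⁻¹ • (P A + s • epsAct w P A)

/-- coefficientwise complex conjugation. -/
def conjFam (P : SL2Z → Polynomial ℂ) : SL2Z → Polynomial ℂ :=
  fun A => (P A).map (starRingEnd ℂ)

/-- the periods `r_{A,n}(f)`, extracted from any `P ∈ V_w^Γ` by
`P(A)(X) = Σₙ (-1)^{w-n} binom(w,n) r_{A,n} X^{w-n}`. -/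
def per (w : ℕ) (P : SL2Z → Polynomial ℂ) (A : SL2Z) (n : ℕ) : ℂ :=
  (-1 : ℂ) ^ (w - n) * ((w.choose n : ℂ))⁻¹ * (P A).coeff (w - n)

/-- `f*(z) = conj (f (-conj z))`. -/
def starForm (f : ℂ → ℂ) : ℂ → ℂ := fun z => (starRingEnd ℂ) (f (-(starRingEnd ℂ) z))

lemma mc_epsConj (A : SL2Z) :
    mc (epsConj A) 0 0 = mc A 0 0 ∧ mc (epsConj A) 0 1 = -mc A 0 1 ∧
    mc (epsConj A) 1 0 = -mc A 1 0 ∧ mc (epsConj A) 1 1 = mc A 1 1 := by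
  refine ⟨?_, ?_, ?_, ?_⟩ <;> simp [mc, epsConj]

lemma slash_star (k : ℤ) (A : SL2Z) (f : ℂ → ℂ) (z : ℂ) :
    slashk k A (starForm f) z
      = (starRingEnd ℂ) (slashk k (epsConj A) f (-(starRingEnd ℂ) z)) := by
  obtain ⟨h1, h2, h3, h4⟩ := mc_epsConj A
  have hc : ∀ i j, (starRingEnd ℂ) (mc A i j) = mc A i j := by
    intro i j; simp [mc]
  simp only [slashk, starForm, h1, h2, h3, h4, _root_.map_mul, map_zpow₀, map_div₀, map_add,
    map_neg, Complex.conj_conj, hc]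
  ring_nf

lemma neg_conj_mem {z : ℂ} (hz : z ∈ uhp) : -(starRingEnd ℂ) z ∈ uhp := by
  simpa [uhp] using hz

lemma starForm_cusp (Γ : Subgroup SL2Z) (k : ℤ)
    (hΓ : ∀ γ : SL2Z, epsConj γ ∈ Γ ↔ γ ∈ Γ)
    (f : ℂ → ℂ) (hf : IsCuspForm Γ k f) : IsCuspForm Γ k (starForm f) := by
  constructor
  · -- holomorphy
    intro z hz
    obtain ⟨F, hF⟩ := hf.holo _ (neg_conj_mem hz)
    have hm : HasFDerivAt (fun z : ℂ => -((starRingEnd ℂ) z))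
        (-((RCLike.conjCLE : ℂ ≃L[ℝ] ℂ) : ℂ →L[ℝ] ℂ)) z := by
      have := ((RCLike.conjCLE : ℂ ≃L[ℝ] ℂ).hasFDerivAt (x := z)).neg
      simp at this; exact this
    have hmaps : Set.MapsTo (fun z : ℂ => -((starRingEnd ℂ) z)) uhp uhp :=
      fun w hw => neg_conj_mem hw
    have h3 := (hF.restrictScalars ℝ).comp z hm.hasFDerivWithinAt hmaps
    have h4 := ((RCLike.conjCLE : ℂ ≃L[ℝ] ℂ).hasFDerivAt).comp_hasFDerivWithinAt z h3
    refine ⟨ContinuousLinearMap.smulRight (1 : ℂ →L[ℂ] ℂ) (-(starRingEnd ℂ) (F 1)), ?_⟩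
    have heq : (ContinuousLinearMap.smulRight (1 : ℂ →L[ℂ] ℂ)
        (-(starRingEnd ℂ) (F 1))).restrictScalars ℝ
        = ((RCLike.conjCLE : ℂ ≃L[ℝ] ℂ) : ℂ →L[ℝ] ℂ).comp
            ((F.restrictScalars ℝ).comp
              (-((RCLike.conjCLE : ℂ ≃L[ℝ] ℂ) : ℂ →L[ℝ] ℂ))) := by
      ext v
      have hFv : ∀ u : ℂ, F u = u * F 1 := by
        intro u
        have := _root_.map_smul F u (1 : ℂ)
        simpa [smul_eq_mul] using this
      show v • (-(starRingEnd ℂ) (F 1)) = (starRingEnd ℂ) (F (-((starRingEnd ℂ) v)))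
      rw [hFv (-((starRingEnd ℂ) v)), _root_.map_mul (starRingEnd ℂ),
        map_neg (starRingEnd ℂ), Complex.conj_conj, smul_eq_mul]
      ring
    have h5 : HasFDerivWithinAt (starForm f)
        (((RCLike.conjCLE : ℂ ≃L[ℝ] ℂ) : ℂ →L[ℝ] ℂ).comp
            ((F.restrictScalars ℝ).comp
              (-((RCLike.conjCLE : ℂ ≃L[ℝ] ℂ) : ℂ →L[ℝ] ℂ)))) uhp z := by
      have hfun : starForm f = (RCLike.conjCLE : ℂ ≃L[ℝ] ℂ) ∘ f ∘
          (fun z : ℂ => -((starRingEnd ℂ) z)) := by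
        funext w; simp [starForm]
      rw [hfun]; exact h4
    exact h5.of_restrictScalars ℝ heq
  · -- transformation
    intro γ hγ z hz
    rw [slash_star]
    rw [hf.trans _ ((hΓ γ).mpr hγ) _ (neg_conj_mem hz)]
    rfl
  · -- decay
    intro A
    have hmap : Tendsto (fun z : ℂ => -((starRingEnd ℂ) z))
        (Filter.comap Complex.im atTop) (Filter.comap Complex.im atTop) := by
      rw [tendsto_comap_iff]
      have : (Complex.im ∘ fun z : ℂ => -((starRingEnd ℂ) z)) = Complex.im := by
        funext z; simp
      rw [this]
      exact tendsto_comap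
    have h1 := (hf.decay (epsConj A)).comp hmap
    have h2 := (RCLike.continuous_conj.tendsto (0 : ℂ)).comp h1
    rw [map_zero] at h2
    refine h2.congr fun z => ?_
    exact (slash_star k A f z).symm

lemma slash_star_I (k : ℤ) (A : SL2Z) (f : ℂ → ℂ) (y : ℝ) :
    (starRingEnd ℂ) (slashk k A (starForm f) (Complex.I * y))
      = slashk k (epsConj A) f (Complex.I * y) := by
  rw [slash_star, Complex.conj_conj]
  congr 1
  simp [_root_.map_mul, Complex.conj_I, Complex.conj_ofReal]

lemma rho_star (k : ℤ) (w : ℕ) (f : ℂ → ℂ) (A : SL2Z) :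
    conjFam (rho k w (starForm f)) A
      = (-1 : ℂ) ^ (w + 1) • epsAct w (rho k w f) A := by
  unfold conjFam epsAct rho
  rw [Polynomial.map_sum, Polynomial.sum_comp, Finset.smul_sum]
  refine Finset.sum_congr rfl fun m hm => ?_
  have hm' : m ≤ w := Nat.lt_succ_iff.mp (Finset.mem_range.mp hm)
  rw [Polynomial.map_mul, Polynomial.map_pow, Polynomial.map_C, Polynomial.map_X,
    Polynomial.mul_comp, Polynomial.C_comp, Polynomial.pow_comp, Polynomial.X_comp,
    neg_pow (X : ℂ[X]) m, smul_eq_C_mul]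
  have hint : (starRingEnd ℂ)
      (∫ y in Set.Ioi (0 : ℝ), slashk k A (starForm f) (Complex.I * y) * (y : ℂ) ^ (w - m))
      = ∫ y in Set.Ioi (0 : ℝ), slashk k (epsConj A) f (Complex.I * y) * (y : ℂ) ^ (w - m) := by
    rw [← integral_conj]
    refine integral_congr_ae (Filter.Eventually.of_forall fun y => ?_)
    simp only [_root_.map_mul, slash_star_I, map_pow, Complex.conj_ofReal]
  rw [_root_.map_mul (starRingEnd ℂ), hint, _root_.map_mul (starRingEnd ℂ),
    _root_.map_mul (starRingEnd ℂ), map_pow, map_pow, map_neg, map_one (starRingEnd ℂ),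
    Complex.conj_natCast, Complex.conj_I]
  have e1 : ((-1 : ℂ)) ^ m * (-Complex.I) ^ (w - m + 1)
      = (-1 : ℂ) ^ (w + 1) * ((-1 : ℂ) ^ m * ((-1 : ℂ) ^ m * Complex.I ^ (w - m + 1))) := by
    rw [neg_pow Complex.I]
    have h2 : (-1 : ℂ) ^ m * (-1 : ℂ) ^ (w - m + 1) = (-1 : ℂ) ^ (w + 1) := by
      rw [← pow_add]; congr 1; omega
    have h3 : (-1 : ℂ) ^ m * (-1 : ℂ) ^ m = 1 := by
      rw [← pow_add, ← two_mul, pow_mul]; norm_num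
    calc (-1 : ℂ) ^ m * ((-1 : ℂ) ^ (w - m + 1) * Complex.I ^ (w - m + 1))
        = ((-1 : ℂ) ^ m * (-1 : ℂ) ^ (w - m + 1)) * (((-1 : ℂ) ^ m * (-1 : ℂ) ^ m) *
            Complex.I ^ (w - m + 1)) := by rw [h3]; ring
      _ = _ := by rw [h2]; ring
  set J := ∫ y in Set.Ioi (0 : ℝ), slashk k (epsConj A) f (Complex.I * y) * (y : ℂ) ^ (w - m)
    with hJ
  have key2 : (-(1 : ℂ)) ^ m * (w.choose m : ℂ) * (-Complex.I) ^ (w - m + 1) * J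
      = (-1 : ℂ) ^ (w + 1) * (((-1 : ℂ) ^ m * (w.choose m : ℂ) * Complex.I ^ (w - m + 1) * J)
          * (-1 : ℂ) ^ m) := by
    linear_combination J * (w.choose m : ℂ) * e1
  have hC : (-1 : Polynomial ℂ) = Polynomial.C (-1 : ℂ) := by simp
  rw [hC, ← Polynomial.C_pow, key2, Polynomial.C_mul, Polynomial.C_mul]
  ring

/-- if `εΓε = Γ` then `f*` is a cusp form in `S_k(Γ)` and
`conj (ρ_{f*}) = (-1)^{w+1} (ρ_f|ε)`. -/
theorem statement2 (Γ : Subgroup SL2Z) [Γ.FiniteIndex] (k : ℤ) (hk : 2 ≤ k)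
    (w : ℕ) (hw : (w : ℤ) = k - 2)
    (hΓ : ∀ γ : SL2Z, epsConj γ ∈ Γ ↔ γ ∈ Γ)
    (f : ℂ → ℂ) (hf : IsCuspForm Γ k f) :
    IsCuspForm Γ k (starForm f) ∧
    ∀ A : SL2Z, conjFam (rho k w (starForm f)) A
      = (-1 : ℂ) ^ (w + 1) • epsAct w (rho k w f) A := by
  exact ⟨starForm_cusp Γ k hΓ f hf, fun A => rho_star k w f A⟩

end
end

section
/- For every P ∈ V_w^Γ with P|T = P and every Q ∈ W_w^Γ, one has {P|(1−S), Q} = 0; that is, the coboundary polynomials C_w^Γ are orthogonal to all period polynomials W_w^Γ with respect to the pairing {·,·}. -/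
noncomputable section

open Matrix Polynomial Finset Filter MeasureTheory

section Aux

open Polynomial Finset

lemma mc_mul (g h : SL2Z) (i j : Fin 2) :
    mc (g * h) i j = mc g i 0 * mc h 0 j + mc g i 1 * mc h 1 j := by
  simp only [mc, Matrix.SpecialLinearGroup.coe_mul, Matrix.mul_apply, Fin.sum_univ_two]
  push_cast
  ring

lemma mc_det (g : SL2Z) : mc g 0 0 * mc g 1 1 - mc g 0 1 * mc g 1 0 = 1 := by
  have h := g.2
  rw [Matrix.det_fin_two] at h
  simp only [mc]
  have := congrArg (fun x : ℤ => (x : ℂ)) h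
  push_cast at this
  linear_combination this

lemma mc_one (i j : Fin 2) : mc (1 : SL2Z) i j = if i = j then 1 else 0 := by
  simp [mc, Matrix.SpecialLinearGroup.coe_one, Matrix.one_apply]

/-- evaluation formula for pSlash -/
lemma eval_pSlash (w : ℕ) (P : Polynomial ℂ) (g : SL2Z) (z : ℂ) :
    (pSlash w P g).eval z =
      ∑ n ∈ Finset.range (w + 1),
        P.coeff n * (mc g 0 0 * z + mc g 0 1) ^ n * (mc g 1 0 * z + mc g 1 1) ^ (w - n) := by
  simp [pSlash, eval_finset_sum]

lemma natDegree_pSlash_le (w : ℕ) (P : Polynomial ℂ) (g : SL2Z) :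
    (pSlash w P g).natDegree ≤ w := by
  apply natDegree_sum_le_of_forall_le
  intro n hn
  rw [Finset.mem_range] at hn
  calc (C (P.coeff n) * (C (mc g 0 0) * X + C (mc g 0 1)) ^ n *
        (C (mc g 1 0) * X + C (mc g 1 1)) ^ (w - n)).natDegree
      ≤ (C (P.coeff n) * (C (mc g 0 0) * X + C (mc g 0 1)) ^ n).natDegree +
          ((C (mc g 1 0) * X + C (mc g 1 1)) ^ (w - n)).natDegree := natDegree_mul_le
    _ ≤ ((C (P.coeff n)).natDegree + ((C (mc g 0 0) * X + C (mc g 0 1)) ^ n).natDegree) +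
          ((C (mc g 1 0) * X + C (mc g 1 1)) ^ (w - n)).natDegree := by
        gcongr; exact natDegree_mul_le
    _ ≤ (0 + n * 1) + (w - n) * 1 := by
        gcongr
        · exact le_of_eq (natDegree_C _)
        · exact natDegree_pow_le.trans (by gcongr; exact natDegree_linear_le)
        · exact natDegree_pow_le.trans (by gcongr; exact natDegree_linear_le)
    _ ≤ w := by omega

lemma degree_pSlash_le (w : ℕ) (P : Polynomial ℂ) (g : SL2Z) :
    (pSlash w P g).degree ≤ (w : ℕ) := by
  exact degree_le_of_natDegree_le (natDegree_pSlash_le w P g)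

lemma pSlash_one (w : ℕ) (P : Polynomial ℂ) (hP : P.natDegree ≤ w) :
    pSlash w P 1 = P := by
  conv_rhs => rw [P.as_sum_range' (w + 1) (by omega)]
  unfold pSlash
  refine Finset.sum_congr rfl fun n hn => ?_
  rw [mc_one, mc_one, mc_one, mc_one]
  simp [C_mul_X_pow_eq_monomial]

lemma pSlash_add (w : ℕ) (P Q : Polynomial ℂ) (g : SL2Z) :
    pSlash w (P + Q) g = pSlash w P g + pSlash w Q g := by
  unfold pSlash
  rw [← Finset.sum_add_distrib]
  refine Finset.sum_congr rfl fun n _ => ?_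
  rw [coeff_add, C_add]
  ring

lemma pSlash_neg (w : ℕ) (P : Polynomial ℂ) (g : SL2Z) :
    pSlash w (-P) g = -pSlash w P g := by
  unfold pSlash
  rw [← Finset.sum_neg_distrib]
  refine Finset.sum_congr rfl fun n _ => ?_
  rw [coeff_neg, C_neg]
  ring

lemma pSlash_sub (w : ℕ) (P Q : Polynomial ℂ) (g : SL2Z) :
    pSlash w (P - Q) g = pSlash w P g - pSlash w Q g := by
  rw [sub_eq_add_neg, pSlash_add, pSlash_neg, sub_eq_add_neg]

lemma pSlash_C_mul (w : ℕ) (c : ℂ) (P : Polynomial ℂ) (g : SL2Z) :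
    pSlash w (C c * P) g = C c * pSlash w P g := by
  unfold pSlash
  rw [Finset.mul_sum]
  refine Finset.sum_congr rfl fun n _ => ?_
  rw [coeff_C_mul, C_mul]
  ring

lemma pSlash_smul (w : ℕ) (c : ℂ) (P : Polynomial ℂ) (g : SL2Z) :
    pSlash w (c • P) g = c • pSlash w P g := by
  rw [smul_eq_C_mul, smul_eq_C_mul, pSlash_C_mul]

end Aux
section Aux2

open Polynomial Finset

lemma eval_pSlash' (w : ℕ) (P : Polynomial ℂ) (g : SL2Z) (z : ℂ)
    (hP : P.natDegree ≤ w) (hz : mc g 1 0 * z + mc g 1 1 ≠ 0) :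
    (pSlash w P g).eval z = (mc g 1 0 * z + mc g 1 1) ^ w *
      P.eval ((mc g 0 0 * z + mc g 0 1) / (mc g 1 0 * z + mc g 1 1)) := by
  rw [eval_pSlash, eval_eq_sum_range' (lt_of_le_of_lt hP (Nat.lt_succ_self w)), Finset.mul_sum]
  refine Finset.sum_congr rfl fun n hn => ?_
  rw [Finset.mem_range] at hn
  rw [div_pow, pow_sub₀ _ hz (by omega)]
  field_simp

lemma badset_subsingleton (g : SL2Z) :
    Set.Subsingleton {z : ℂ | mc g 1 0 * z + mc g 1 1 = 0} := by
  intro z hz z' hz'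
  simp only [Set.mem_setOf_eq] at hz hz'
  by_cases hc : mc g 1 0 = 0
  · exfalso
    have hd : mc g 1 1 = 0 := by rw [hc] at hz; simpa using hz
    have := mc_det g
    rw [hc, hd] at this
    simp at this
  · have : mc g 1 0 * z = mc g 1 0 * z' := by linear_combination hz - hz'
    exact mul_left_cancel₀ hc this

lemma cocycle_c (g h : SL2Z) (z : ℂ) (hz : mc h 1 0 * z + mc h 1 1 ≠ 0) :
    (mc g 1 0 * ((mc h 0 0 * z + mc h 0 1) / (mc h 1 0 * z + mc h 1 1)) + mc g 1 1) *
      (mc h 1 0 * z + mc h 1 1) = mc (g * h) 1 0 * z + mc (g * h) 1 1 := by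
  rw [mc_mul, mc_mul]
  simp only [add_mul, mul_assoc, div_mul_cancel₀ _ hz]
  ring

lemma cocycle_a (g h : SL2Z) (z : ℂ) (hz : mc h 1 0 * z + mc h 1 1 ≠ 0) :
    (mc g 0 0 * ((mc h 0 0 * z + mc h 0 1) / (mc h 1 0 * z + mc h 1 1)) + mc g 0 1) *
      (mc h 1 0 * z + mc h 1 1) = mc (g * h) 0 0 * z + mc (g * h) 0 1 := by
  rw [mc_mul, mc_mul]
  simp only [add_mul, mul_assoc, div_mul_cancel₀ _ hz]
  ring

lemma pSlash_comp (w : ℕ) (P : Polynomial ℂ) (g h : SL2Z) (hP : P.natDegree ≤ w) :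
    pSlash w (pSlash w P g) h = pSlash w P (g * h) := by
  apply Polynomial.eq_of_infinite_eval_eq
  have hfin : Set.Finite ({z : ℂ | mc h 1 0 * z + mc h 1 1 = 0} ∪
      {z : ℂ | mc (g * h) 1 0 * z + mc (g * h) 1 1 = 0}) :=
    Set.Finite.union (badset_subsingleton h).finite (badset_subsingleton (g * h)).finite
  refine Set.Infinite.mono ?_ hfin.infinite_compl
  · intro z hz
    simp only [Set.mem_compl_iff, Set.mem_union, Set.mem_setOf_eq, not_or] at hz
    obtain ⟨hz1, hz2⟩ := hz
    set y := (mc h 0 0 * z + mc h 0 1) / (mc h 1 0 * z + mc h 1 1) with hy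
    have hcy : (mc g 1 0 * y + mc g 1 1) * (mc h 1 0 * z + mc h 1 1) =
        mc (g * h) 1 0 * z + mc (g * h) 1 1 := cocycle_c g h z hz1
    have hay : (mc g 0 0 * y + mc g 0 1) * (mc h 1 0 * z + mc h 1 1) =
        mc (g * h) 0 0 * z + mc (g * h) 0 1 := cocycle_a g h z hz1
    have hgy : mc g 1 0 * y + mc g 1 1 ≠ 0 := by
      intro hcon
      rw [hcon, zero_mul] at hcy
      exact hz2 hcy.symm
    show (pSlash w (pSlash w P g) h).eval z = (pSlash w P (g * h)).eval z
    rw [eval_pSlash' w _ h z (natDegree_pSlash_le w P g) hz1,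
      eval_pSlash' w P g y hP hgy, eval_pSlash' w P (g * h) z hP hz2]
    have hmob : (mc g 0 0 * y + mc g 0 1) / (mc g 1 0 * y + mc g 1 1) =
        (mc (g * h) 0 0 * z + mc (g * h) 0 1) / (mc (g * h) 1 0 * z + mc (g * h) 1 1) := by
      rw [← hcy, ← hay, mul_div_mul_right _ _ hz1]
    rw [hmob, ← hcy, mul_pow]
    ring

end Aux2
section Aux3

open Polynomial Finset

lemma choose_ne (w n : ℕ) (h : n ≤ w) : ((w.choose n : ℂ)) ≠ 0 := by
  exact_mod_cast Nat.cast_ne_zero.mpr (Nat.choose_pos h).ne'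

lemma pairV_add_right (w : ℕ) (P Q R : Polynomial ℂ) :
    pairV w P (Q + R) = pairV w P Q + pairV w P R := by
  unfold pairV
  rw [← Finset.sum_add_distrib]
  exact Finset.sum_congr rfl fun n _ => by rw [coeff_add]; ring

lemma pairV_neg_right (w : ℕ) (P Q : Polynomial ℂ) :
    pairV w P (-Q) = -pairV w P Q := by
  unfold pairV
  rw [← Finset.sum_neg_distrib]
  exact Finset.sum_congr rfl fun n _ => by rw [coeff_neg]; ring

lemma pairV_sub_left (w : ℕ) (P Q R : Polynomial ℂ) :
    pairV w (P - Q) R = pairV w P R - pairV w Q R := by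
  unfold pairV
  rw [← Finset.sum_sub_distrib]
  exact Finset.sum_congr rfl fun n _ => by rw [coeff_sub]; ring

lemma pairV_sum_left {ι : Type*} (w : ℕ) (s : Finset ι) (f : ι → Polynomial ℂ)
    (Q : Polynomial ℂ) : pairV w (∑ i ∈ s, f i) Q = ∑ i ∈ s, pairV w (f i) Q := by
  unfold pairV
  rw [Finset.sum_comm]
  refine Finset.sum_congr rfl fun n _ => ?_
  rw [finset_sum_coeff]
  simp only [Finset.mul_sum, Finset.sum_mul]

lemma pairV_sum_right {ι : Type*} (w : ℕ) (s : Finset ι) (P : Polynomial ℂ)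
    (f : ι → Polynomial ℂ) : pairV w P (∑ i ∈ s, f i) = ∑ i ∈ s, pairV w P (f i) := by
  unfold pairV
  rw [Finset.sum_comm]
  refine Finset.sum_congr rfl fun n _ => ?_
  rw [finset_sum_coeff, Finset.mul_sum]

lemma pairV_C_mul_left (w : ℕ) (c : ℂ) (P Q : Polynomial ℂ) :
    pairV w (C c * P) Q = c * pairV w P Q := by
  unfold pairV
  rw [Finset.mul_sum]
  exact Finset.sum_congr rfl fun n _ => by rw [coeff_C_mul]; ring

lemma pairV_C_mul_right (w : ℕ) (c : ℂ) (P Q : Polynomial ℂ) :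
    pairV w P (C c * Q) = c * pairV w P Q := by
  unfold pairV
  rw [Finset.mul_sum]
  exact Finset.sum_congr rfl fun n _ => by rw [coeff_C_mul]; ring

lemma pairV_pow (w i j : ℕ) (hi : i ≤ w) :
    pairV w (X ^ i : Polynomial ℂ) (X ^ j) =
      if j = w - i then (-1 : ℂ) ^ (w - i) * ((w.choose i : ℂ))⁻¹ else 0 := by
  unfold pairV
  rw [Finset.sum_eq_single i]
  · rw [coeff_X_pow, coeff_X_pow, if_pos rfl]
    by_cases h : j = w - i
    · rw [if_pos h.symm, if_pos h]; ring
    · rw [if_neg (fun hh => h hh.symm), if_neg h]; ring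
  · intro n _ hn
    rw [coeff_X_pow, if_neg (fun hh => hn hh)]
    ring
  · intro hmem
    exact absurd (Finset.mem_range.mpr (by omega)) hmem

lemma pairV_expand (w : ℕ) (P Q : Polynomial ℂ) :
    pairV w P Q = ∑ i ∈ Finset.range (w + 1), ∑ j ∈ Finset.range (w + 1),
      P.coeff i * Q.coeff j * pairV w (X ^ i) (X ^ j) := by
  have h1 : ∀ i ∈ Finset.range (w + 1), ∑ j ∈ Finset.range (w + 1),
      P.coeff i * Q.coeff j * pairV w (X ^ i) (X ^ j) =
      P.coeff i * Q.coeff (w - i) * ((-1 : ℂ) ^ (w - i) * ((w.choose i : ℂ))⁻¹) := by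
    intro i hi
    rw [Finset.mem_range] at hi
    have hi' : i ≤ w := by omega
    rw [Finset.sum_eq_single (w - i)]
    · rw [pairV_pow w i (w - i) hi', if_pos rfl]
    · intro j _ hj
      rw [pairV_pow w i j hi', if_neg hj, mul_zero]
    · intro hmem
      exact absurd (Finset.mem_range.mpr (by omega)) hmem
  rw [Finset.sum_congr rfl h1]
  unfold pairV
  exact Finset.sum_congr rfl fun n _ => by ring

lemma pairV_XaddC (w : ℕ) (a b : ℂ) :
    pairV w ((X + C a) ^ w) ((X + C b) ^ w) = (b - a) ^ w := by
  unfold pairV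
  have key : ∀ n ∈ Finset.range (w + 1),
      (-1 : ℂ) ^ (w - n) * ((w.choose n : ℂ))⁻¹ * ((X + C a) ^ w).coeff n *
        ((X + C b) ^ w).coeff (w - n) = (b : ℂ) ^ n * (-a) ^ (w - n) * (w.choose n : ℂ) := by
    intro n hn
    rw [Finset.mem_range] at hn
    rw [coeff_X_add_C_pow, coeff_X_add_C_pow]
    have h1 : w - (w - n) = n := by omega
    have h2 : (w.choose (w - n) : ℂ) = (w.choose n : ℂ) := by
      rw [Nat.choose_symm (by omega : n ≤ w)]
    rw [h1, h2]
    have hch := choose_ne w n (by omega)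
    field_simp
    rw [neg_pow]
    ring
  rw [Finset.sum_congr rfl key, sub_eq_add_neg, add_pow]

end Aux3
section Aux4

open Polynomial Finset

/-- the image of the monomial `X^i` under the slash action -/
def slMono (w : ℕ) (g : SL2Z) (i : ℕ) : Polynomial ℂ :=
  (C (mc g 0 0) * X + C (mc g 0 1)) ^ i * (C (mc g 1 0) * X + C (mc g 1 1)) ^ (w - i)

lemma pSlash_eq_sum_slMono (w : ℕ) (P : Polynomial ℂ) (g : SL2Z) :
    pSlash w P g = ∑ i ∈ Finset.range (w + 1), C (P.coeff i) * slMono w g i := by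
  unfold pSlash slMono
  exact Finset.sum_congr rfl fun i _ => by ring

lemma pairV_pSlash_expand (w : ℕ) (g : SL2Z) (P Q : Polynomial ℂ) :
    pairV w (pSlash w P g) (pSlash w Q g) =
      ∑ i ∈ Finset.range (w + 1), ∑ j ∈ Finset.range (w + 1),
        P.coeff i * Q.coeff j * pairV w (slMono w g i) (slMono w g j) := by
  rw [pSlash_eq_sum_slMono, pSlash_eq_sum_slMono, pairV_sum_left]
  refine Finset.sum_congr rfl fun i _ => ?_
  rw [pairV_C_mul_left, pairV_sum_right, Finset.mul_sum]
  refine Finset.sum_congr rfl fun j _ => ?_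
  rw [pairV_C_mul_right]
  ring

lemma pairV_pSlash_invar (w : ℕ) (g : SL2Z)
    (hmono : ∀ i j, i < w + 1 → j < w + 1 →
      pairV w (slMono w g i) (slMono w g j) = pairV w (X ^ i) (X ^ j)) :
    ∀ P Q : Polynomial ℂ, pairV w (pSlash w P g) (pSlash w Q g) = pairV w P Q := by
  intro P Q
  rw [pairV_pSlash_expand, pairV_expand w P Q]
  refine Finset.sum_congr rfl fun i hi => Finset.sum_congr rfl fun j hj => ?_
  rw [Finset.mem_range] at hi hj
  rw [hmono i j hi hj]

lemma negpow_congr (m n : ℕ) (h : m % 2 = n % 2) : (-1 : ℂ) ^ m = (-1) ^ n := by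
  rcases Nat.even_or_odd m with he | ho
  · have hm := Nat.even_iff.mp he
    rw [he.neg_one_pow, (Nat.even_iff.mpr (by omega : n % 2 = 0)).neg_one_pow]
  · have hm := Nat.odd_iff.mp ho
    rw [ho.neg_one_pow, (Nat.odd_iff.mpr (by omega : n % 2 = 1)).neg_one_pow]

lemma mc_Sm : mc Sm 0 0 = 0 ∧ mc Sm 0 1 = -1 ∧ mc Sm 1 0 = 1 ∧ mc Sm 1 1 = 0 := by
  refine ⟨?_, ?_, ?_, ?_⟩ <;> simp [mc, Sm]

lemma mc_Tm : mc Tm 0 0 = 1 ∧ mc Tm 0 1 = 1 ∧ mc Tm 1 0 = 0 ∧ mc Tm 1 1 = 1 := by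
  refine ⟨?_, ?_, ?_, ?_⟩ <;> simp [mc, Tm]

lemma slMono_Sm (w i : ℕ) : slMono w Sm i = C ((-1 : ℂ) ^ i) * X ^ (w - i) := by
  unfold slMono
  rw [mc_Sm.1, mc_Sm.2.1, mc_Sm.2.2.1, mc_Sm.2.2.2]
  simp [← C_pow]

lemma slMono_Tm (w i : ℕ) : slMono w Tm i = (X + 1) ^ i := by
  unfold slMono
  rw [mc_Tm.1, mc_Tm.2.1, mc_Tm.2.2.1, mc_Tm.2.2.2]
  simp

lemma pairV_pSlash_Sm (w : ℕ) (P Q : Polynomial ℂ) :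
    pairV w (pSlash w P Sm) (pSlash w Q Sm) = pairV w P Q := by
  apply pairV_pSlash_invar
  intro i j hi hj
  rw [slMono_Sm, slMono_Sm, pairV_C_mul_left, pairV_C_mul_right,
    pairV_pow w (w - i) (w - j) (by omega), pairV_pow w i j (by omega)]
  by_cases h : j = w - i
  · rw [if_pos (by omega : w - j = w - (w - i)), if_pos h]
    rw [Nat.choose_symm (by omega : i ≤ w)]
    have h1 : w - (w - i) = i := by omega
    rw [h1]
    rw [show (-1 : ℂ) ^ i * ((-1 : ℂ) ^ j * ((-1 : ℂ) ^ i * ((w.choose i : ℂ))⁻¹)) =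
      ((-1 : ℂ) ^ i * (-1 : ℂ) ^ j * (-1 : ℂ) ^ i) * ((w.choose i : ℂ))⁻¹ from by ring,
      ← pow_add, ← pow_add]
    rw [negpow_congr (i + j + i) (w - i) (by omega)]
  · rw [if_neg (by omega : ¬ w - j = w - (w - i)), if_neg h]
    simp

lemma coeff_trick (N : ℕ) (d : ℕ → ℂ)
    (h : ∀ x : ℂ, ∑ i ∈ Finset.range (N + 1), d i * x ^ (N - i) = 0) :
    ∀ i, i < N + 1 → d i = 0 := by
  have hp : (∑ i ∈ Finset.range (N + 1), C (d i) * X ^ (N - i)) = 0 := by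
    apply Polynomial.funext
    intro r
    rw [eval_finset_sum, eval_zero]
    simpa using h r
  intro i hi
  have h2 : (0 : Polynomial ℂ).coeff (N - i) =
      ∑ j ∈ Finset.range (N + 1), (C (d j) * X ^ (N - j)).coeff (N - i) := by
    rw [← finset_sum_coeff, hp]
  rw [coeff_zero, Finset.sum_eq_single i] at h2
  · rw [coeff_C_mul, coeff_X_pow, if_pos rfl, mul_one] at h2
    exact h2.symm
  · intro j hj hji
    rw [Finset.mem_range] at hj
    rw [coeff_C_mul, coeff_X_pow, if_neg (by omega), mul_zero]
  · intro hmem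
    exact absurd (Finset.mem_range.mpr hi) hmem

lemma pSlash_Tm_eq (w : ℕ) (P : Polynomial ℂ) :
    pSlash w P Tm = ∑ i ∈ Finset.range (w + 1), C (P.coeff i) * (X + 1) ^ i := by
  rw [pSlash_eq_sum_slMono]
  simp only [slMono_Tm]

lemma pSlash_XaddC_Tm (w : ℕ) (a : ℂ) :
    pSlash w ((X + C a) ^ w) Tm = (X + C (a + 1)) ^ w := by
  rw [pSlash_Tm_eq]
  rw [show (X + C (a + 1) : Polynomial ℂ) = (X + 1) + C a from by rw [C_add, C_1]; ring]
  conv_rhs => rw [add_pow]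
  refine Finset.sum_congr rfl fun i hi => ?_
  rw [coeff_X_add_C_pow, C_mul, C_pow, C_eq_natCast]
  ring

lemma pairV_pSlash_Tm_expand (w : ℕ) (P Q : Polynomial ℂ) :
    pairV w (pSlash w P Tm) (pSlash w Q Tm) =
      ∑ i ∈ Finset.range (w + 1), ∑ j ∈ Finset.range (w + 1),
        P.coeff i * Q.coeff j * pairV w ((X + 1) ^ i) ((X + 1) ^ j) := by
  rw [pairV_pSlash_expand]
  simp only [slMono_Tm]

lemma pairV_pSlash_Tm (w : ℕ) (P Q : Polynomial ℂ) :
    pairV w (pSlash w P Tm) (pSlash w Q Tm) = pairV w P Q := by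
  apply pairV_pSlash_invar
  have key : ∀ a b : ℂ, ∑ i ∈ Finset.range (w + 1),
      ((w.choose i : ℂ) * ∑ j ∈ Finset.range (w + 1),
        ((w.choose j : ℂ) * (pairV w ((X + 1) ^ i) ((X + 1) ^ j) -
          pairV w (X ^ i) (X ^ j))) * b ^ (w - j)) * a ^ (w - i) = 0 := by
    intro a b
    have l1 : ∑ i ∈ Finset.range (w + 1), ∑ j ∈ Finset.range (w + 1),
        ((X + C a) ^ w).coeff i * ((X + C b) ^ w).coeff j *
          pairV w ((X + 1) ^ i) ((X + 1) ^ j) = (b - a) ^ w := by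
      have h := pairV_pSlash_Tm_expand w ((X + C a) ^ w) ((X + C b) ^ w)
      rw [pSlash_XaddC_Tm, pSlash_XaddC_Tm, pairV_XaddC] at h
      rw [← h]
      rw [show b + 1 - (a + 1) = b - a from by ring]
    have l2 : ∑ i ∈ Finset.range (w + 1), ∑ j ∈ Finset.range (w + 1),
        ((X + C a) ^ w).coeff i * ((X + C b) ^ w).coeff j *
          pairV w (X ^ i) (X ^ j) = (b - a) ^ w := by
      rw [← pairV_expand, pairV_XaddC]
    calc ∑ i ∈ Finset.range (w + 1),
        ((w.choose i : ℂ) * ∑ j ∈ Finset.range (w + 1),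
          ((w.choose j : ℂ) * (pairV w ((X + 1) ^ i) ((X + 1) ^ j) -
            pairV w (X ^ i) (X ^ j))) * b ^ (w - j)) * a ^ (w - i)
        = ∑ i ∈ Finset.range (w + 1), ∑ j ∈ Finset.range (w + 1),
          (((X + C a) ^ w).coeff i * ((X + C b) ^ w).coeff j *
            pairV w ((X + 1) ^ i) ((X + 1) ^ j) -
           ((X + C a) ^ w).coeff i * ((X + C b) ^ w).coeff j *
            pairV w (X ^ i) (X ^ j)) := by
          refine Finset.sum_congr rfl fun i _ => ?_
          rw [Finset.mul_sum, Finset.sum_mul]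
          refine Finset.sum_congr rfl fun j _ => ?_
          rw [coeff_X_add_C_pow, coeff_X_add_C_pow]
          ring
      _ = 0 := by
          simp only [Finset.sum_sub_distrib]
          rw [l1, l2, sub_self]
  intro i j hi hj
  rw [slMono_Tm, slMono_Tm, ← sub_eq_zero]
  have step2 : ∀ b : ℂ, ∑ j ∈ Finset.range (w + 1),
      ((w.choose j : ℂ) * (pairV w ((X + 1) ^ i) ((X + 1) ^ j) -
        pairV w (X ^ i) (X ^ j))) * b ^ (w - j) = 0 := by
    intro b
    have step1 := coeff_trick w
      (fun i => (w.choose i : ℂ) * ∑ j ∈ Finset.range (w + 1),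
        ((w.choose j : ℂ) * (pairV w ((X + 1) ^ i) ((X + 1) ^ j) -
          pairV w (X ^ i) (X ^ j))) * b ^ (w - j))
      (fun a => key a b) i hi
    rcases mul_eq_zero.mp step1 with h | h
    · exact absurd h (choose_ne w i (by omega))
    · exact h
  have step3 := coeff_trick w
    (fun j => (w.choose j : ℂ) * (pairV w ((X + 1) ^ i) ((X + 1) ^ j) -
      pairV w (X ^ i) (X ^ j))) step2 j hj
  rcases mul_eq_zero.mp step3 with h | h
  · exact absurd h (choose_ne w j (by omega))
  · exact h

end Aux4
section Aux5

open Polynomial Finset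

/-- `-I` as an element of `SL2Z`. -/
def nI : SL2Z := ⟨!![-1, 0; 0, -1], by norm_num [Matrix.det_fin_two_of]⟩

lemma nI_coe : (nI : Matrix (Fin 2) (Fin 2) ℤ) = -1 := by
  ext i j
  fin_cases i <;> fin_cases j <;>
    simp [nI, Matrix.one_apply]

lemma mul_nI (A : SL2Z) : A * nI = negSL A := by
  apply Subtype.ext
  rw [Matrix.SpecialLinearGroup.coe_mul, nI_coe]
  show A.1 * (-1) = -A.1
  rw [Matrix.mul_neg, Matrix.mul_one]

lemma nI_inv : nI⁻¹ = nI := by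
  apply inv_eq_of_mul_eq_one_right
  apply Subtype.ext
  rw [Matrix.SpecialLinearGroup.coe_mul, nI_coe]
  show (-1 : Matrix (Fin 2) (Fin 2) ℤ) * (-1) = 1
  simp

lemma UmUm_Tm : Um * Um * Tm = Sm := by
  apply Subtype.ext
  rw [Um]
  repeat rw [Matrix.SpecialLinearGroup.coe_mul]
  simp only [Tm, Sm]
  norm_num [Matrix.mul_fin_two]

lemma UmUm : Um * Um = Sm * Tm⁻¹ := by
  rw [← UmUm_Tm, mul_assoc, mul_inv_cancel, mul_one]

lemma UmSm : Um * Sm = nI * Tm := by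
  apply Subtype.ext
  rw [Um]
  repeat rw [Matrix.SpecialLinearGroup.coe_mul]
  simp only [Tm, Sm, nI]
  norm_num [Matrix.mul_fin_two]

lemma mc_nI : mc nI 0 0 = -1 ∧ mc nI 0 1 = 0 ∧ mc nI 1 0 = 0 ∧ mc nI 1 1 = -1 := by
  refine ⟨?_, ?_, ?_, ?_⟩ <;> simp [mc, nI]

lemma pSlash_nI (w : ℕ) (R : Polynomial ℂ) :
    pSlash w R nI = C ((-1 : ℂ) ^ w) * pSlash w R 1 := by
  unfold pSlash
  rw [Finset.mul_sum]
  refine Finset.sum_congr rfl fun n hn => ?_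
  rw [Finset.mem_range] at hn
  rw [mc_nI.1, mc_nI.2.1, mc_nI.2.2.1, mc_nI.2.2.2,
    mc_one, mc_one, mc_one, mc_one]
  rw [if_neg (by decide : ¬ (0 : Fin 2) = 1), if_neg (by decide : ¬ (1 : Fin 2) = 0),
    if_pos rfl, if_pos rfl]
  have e1 : (C (-1 : ℂ) * X + C 0) = -X := by simp
  have e2 : (C (0 : ℂ) * X + C (-1)) = -1 := by simp
  have e3 : (C (1 : ℂ) * X + C 0) = X := by simp
  have e4 : (C (0 : ℂ) * X + C 1) = 1 := by simp
  rw [e1, e2, e3, e4, neg_pow (X : Polynomial ℂ) n]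
  have hpow : ((-1 : Polynomial ℂ)) ^ n * (-1) ^ (w - n) = C ((-1 : ℂ) ^ w) := by
    rw [← pow_add, show n + (w - n) = w from by omega]
    rw [show ((-1 : Polynomial ℂ)) = C (-1 : ℂ) from by rw [C_neg, C_1], ← C_pow]
  calc C (R.coeff n) * ((-1 : Polynomial ℂ) ^ n * X ^ n) * (-1) ^ (w - n)
      = ((-1 : Polynomial ℂ) ^ n * (-1) ^ (w - n)) * (C (R.coeff n) * X ^ n) := by ring
    _ = C ((-1 : ℂ) ^ w) * (C (R.coeff n) * X ^ n * 1 ^ (w - n)) := by rw [hpow]; ring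

lemma famSlash_deg (w : ℕ) (P : SL2Z → Polynomial ℂ) (g : SL2Z) (A : SL2Z) :
    (famSlash w P g A).natDegree ≤ w := natDegree_pSlash_le w _ g

lemma famSlash_leftinv {Γ : Subgroup SL2Z} {w : ℕ} {P : SL2Z → Polynomial ℂ}
    (hP : ∀ γ ∈ Γ, ∀ A, P (γ * A) = P A) (g : SL2Z) :
    ∀ γ ∈ Γ, ∀ A, famSlash w P g (γ * A) = famSlash w P g A := by
  intro γ hγ A
  unfold famSlash
  rw [mul_assoc, hP γ hγ]

lemma famSlash_comp (w : ℕ) (P : SL2Z → Polynomial ℂ) (hP : ∀ A, (P A).natDegree ≤ w)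
    (g h : SL2Z) : famSlash w (famSlash w P g) h = famSlash w P (g * h) := by
  funext A
  unfold famSlash
  rw [pSlash_comp w _ g h (hP _), _root_.mul_inv_rev, ← mul_assoc]

lemma famSlash_one (w : ℕ) (P : SL2Z → Polynomial ℂ) (hP : ∀ A, (P A).natDegree ≤ w) :
    famSlash w P 1 = P := by
  funext A
  unfold famSlash
  rw [inv_one, mul_one, pSlash_one w _ (hP A)]

lemma degle_natdegle {w : ℕ} {p : Polynomial ℂ} (h : p.degree ≤ (w : ℕ)) :
    p.natDegree ≤ w := natDegree_le_iff_degree_le.mpr h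

lemma famSlash_nI {Γ : Subgroup SL2Z} {w : ℕ} {P : SL2Z → Polynomial ℂ}
    (hP : MemV Γ w P) : famSlash w P nI = P := by
  funext A
  unfold famSlash
  rw [nI_inv, mul_nI, hP.parity A, pSlash_smul, pSlash_nI,
    pSlash_one w _ (degle_natdegle (hP.deg A))]
  rw [smul_eq_C_mul, ← mul_assoc, ← C_mul, ← mul_pow]
  norm_num

end Aux5
section Aux6

open Polynomial Finset

lemma sum_transversal {Γ : Subgroup SL2Z} {Rt : Finset SL2Z} (hRt : IsTransversal Γ Rt)
    (f : SL2Z → ℂ) (hf : ∀ γ ∈ Γ, ∀ A, f (γ * A) = f A) (g : SL2Z) :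
    ∑ A ∈ Rt, f (A * g) = ∑ A ∈ Rt, f A := by
  have hRt' : Subgroup.IsComplement (Γ : Set SL2Z) (Rt : Set SL2Z) := hRt
  have fst_mem : ∀ x : SL2Z, ((hRt'.equiv x).1 : SL2Z) ∈ Γ := fun x => (hRt'.equiv x).1.2
  have snd_mem : ∀ x : SL2Z, ((hRt'.equiv x).2 : SL2Z) ∈ Rt := fun x =>
    Finset.mem_coe.mp (hRt'.equiv x).2.2
  have round : ∀ (h : SL2Z) (A : SL2Z), A ∈ Rt →
      ((hRt'.equiv (((hRt'.equiv (A * h)).2 : SL2Z) * h⁻¹)).2 : SL2Z) = A := by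
    intro h A hA
    have hdec : ((hRt'.equiv (A * h)).1 : SL2Z) * ((hRt'.equiv (A * h)).2 : SL2Z) = A * h :=
      hRt'.equiv_fst_mul_equiv_snd (A * h)
    have heq : ((hRt'.equiv (A * h)).2 : SL2Z) * h⁻¹ =
        (((hRt'.equiv (A * h)).1 : SL2Z))⁻¹ * A := by
      have h2 : ((hRt'.equiv (A * h)).2 : SL2Z) =
          (((hRt'.equiv (A * h)).1 : SL2Z))⁻¹ * (A * h) := eq_inv_mul_of_mul_eq hdec
      rw [h2]
      simp [mul_assoc]
    rw [heq, hRt'.equiv_mul_left_of_mem (inv_mem (fst_mem (A * h)))]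
    have := hRt'.equiv_snd_eq_self_of_mem_of_one_mem (Γ.one_mem) (Finset.mem_coe.mpr hA)
    rw [this]
  refine Finset.sum_nbij' (i := fun A => ((hRt'.equiv (A * g)).2 : SL2Z))
    (j := fun A => ((hRt'.equiv (A * g⁻¹)).2 : SL2Z)) ?_ ?_ ?_ ?_ ?_
  · intro A _; exact snd_mem _
  · intro A _; exact snd_mem _
  · intro A hA
    exact round g A hA
  · intro A hA
    have h2 := round g⁻¹ A hA
    rw [inv_inv] at h2
    exact h2
  · intro A hA
    have hdec : ((hRt'.equiv (A * g)).1 : SL2Z) * ((hRt'.equiv (A * g)).2 : SL2Z) = A * g :=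
      hRt'.equiv_fst_mul_equiv_snd (A * g)
    rw [← hdec, hf _ (fst_mem (A * g))]
    rw [hdec]

end Aux6
section Aux7

open Polynomial Finset

variable {Γ : Subgroup SL2Z} {w : ℕ}

lemma pairG_congr_left (Rt : Finset SL2Z) (X X' Q : SL2Z → Polynomial ℂ)
    (h : ∀ A, X A = X' A) : pairG Γ w Rt X Q = pairG Γ w Rt X' Q := by
  unfold pairG
  congr 1
  exact Finset.sum_congr rfl fun A _ => by rw [h A]

lemma pairG_congr_right (Rt : Finset SL2Z) (X Q Q' : SL2Z → Polynomial ℂ)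
    (h : ∀ A, Q A = Q' A) : pairG Γ w Rt X Q = pairG Γ w Rt X Q' := by
  unfold pairG
  congr 1
  exact Finset.sum_congr rfl fun A _ => by rw [h A]

lemma pairG_sub_left (Rt : Finset SL2Z) (X Y Q : SL2Z → Polynomial ℂ) :
    pairG Γ w Rt (fun A => X A - Y A) Q = pairG Γ w Rt X Q - pairG Γ w Rt Y Q := by
  unfold pairG
  rw [← mul_sub, ← Finset.sum_sub_distrib]
  congr 1
  exact Finset.sum_congr rfl fun A _ => pairV_sub_left w (X A) (Y A) (Q A)

lemma pairG_add_right (Rt : Finset SL2Z) (X Q R : SL2Z → Polynomial ℂ) :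
    pairG Γ w Rt X (fun A => Q A + R A) = pairG Γ w Rt X Q + pairG Γ w Rt X R := by
  unfold pairG
  rw [← mul_add, ← Finset.sum_add_distrib]
  congr 1
  exact Finset.sum_congr rfl fun A _ => pairV_add_right w (X A) (Q A) (R A)

lemma pairG_neg_right (Rt : Finset SL2Z) (X Q : SL2Z → Polynomial ℂ) :
    pairG Γ w Rt X (fun A => -Q A) = -pairG Γ w Rt X Q := by
  unfold pairG
  rw [← mul_neg, ← Finset.sum_neg_distrib]
  congr 1
  exact Finset.sum_congr rfl fun A _ => pairV_neg_right w (X A) (Q A)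

lemma pairG_slash_inv (Rt : Finset SL2Z) (hRt : IsTransversal Γ Rt) (g : SL2Z)
    (hg : ∀ R S : Polynomial ℂ, R.natDegree ≤ w → S.natDegree ≤ w →
      pairV w (pSlash w R g) (pSlash w S g) = pairV w R S)
    (P Q : SL2Z → Polynomial ℂ)
    (hPdeg : ∀ A, (P A).natDegree ≤ w) (hQdeg : ∀ A, (Q A).natDegree ≤ w)
    (hPinv : ∀ γ ∈ Γ, ∀ A, P (γ * A) = P A) (hQinv : ∀ γ ∈ Γ, ∀ A, Q (γ * A) = Q A) :
    pairG Γ w Rt (famSlash w P g) (famSlash w Q g) = pairG Γ w Rt P Q := by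
  unfold pairG
  congr 1
  calc ∑ A ∈ Rt, pairV w (famSlash w P g A) (famSlash w Q g A)
      = ∑ A ∈ Rt, pairV w (P (A * g⁻¹)) (Q (A * g⁻¹)) :=
        Finset.sum_congr rfl fun A _ => hg _ _ (hPdeg _) (hQdeg _)
    _ = ∑ A ∈ Rt, pairV w (P A) (Q A) :=
        sum_transversal hRt (fun B => pairV w (P B) (Q B))
          (fun γ hγ A => by show pairV w (P (γ * A)) (Q (γ * A)) = pairV w (P A) (Q A); rw [hPinv γ hγ, hQinv γ hγ]) g⁻¹

lemma pairV_pSlash_TmInv (w : ℕ) (R S : Polynomial ℂ) (hR : R.natDegree ≤ w)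
    (hS : S.natDegree ≤ w) :
    pairV w (pSlash w R Tm⁻¹) (pSlash w S Tm⁻¹) = pairV w R S := by
  have h := pairV_pSlash_Tm w (pSlash w R Tm⁻¹) (pSlash w S Tm⁻¹)
  rw [pSlash_comp w R Tm⁻¹ Tm hR, pSlash_comp w S Tm⁻¹ Tm hS, inv_mul_cancel,
    pSlash_one w R hR, pSlash_one w S hS] at h
  exact h.symm

end Aux7
/-- the coboundary polynomials are orthogonal to all period polynomials:
for `P ∈ V_w^Γ` with `P|T = P` and `Q ∈ W_w^Γ`, `{P|(1-S), Q} = 0`. -/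
theorem statement7 (Γ : Subgroup SL2Z) [Γ.FiniteIndex] (k : ℤ) (hk : 2 ≤ k)
    (w : ℕ) (hw : (w : ℤ) = k - 2)
    (Rt : Finset SL2Z) (hRt : IsTransversal Γ Rt)
    (P Q : SL2Z → Polynomial ℂ) (hP : MemV Γ w P) (hPT : ∀ A, famSlash w P Tm A = P A)
    (hQ : MemW Γ w Q) :
    brk Γ w Rt (fun A => P A - famSlash w P Sm A) Q = 0 := by
  obtain ⟨hQV, hQS, hQU⟩ := hQ
  have hPdeg : ∀ A, (P A).natDegree ≤ w := fun A => degle_natdegle (hP.deg A)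
  have hQdeg : ∀ A, (Q A).natDegree ≤ w := fun A => degle_natdegle (hQV.deg A)
  have hPinv := hP.inv
  have hQinv := hQV.inv
  -- the three pairing invariances at the `pairG` level
  have invT := fun (X Y : SL2Z → Polynomial ℂ) hXd hYd hXi hYi =>
    pairG_slash_inv (Γ := Γ) (w := w) Rt hRt Tm
      (fun R S _ _ => pairV_pSlash_Tm w R S) X Y hXd hYd hXi hYi
  have invTinv := fun (X Y : SL2Z → Polynomial ℂ) hXd hYd hXi hYi =>
    pairG_slash_inv (Γ := Γ) (w := w) Rt hRt Tm⁻¹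
      (fun R S hR hS => pairV_pSlash_TmInv w R S hR hS) X Y hXd hYd hXi hYi
  have invS := fun (X Y : SL2Z → Polynomial ℂ) hXd hYd hXi hYi =>
    pairG_slash_inv (Γ := Γ) (w := w) Rt hRt Sm
      (fun R S _ _ => pairV_pSlash_Sm w R S) X Y hXd hYd hXi hYi
  -- basic function-level identities
  have hPT' : famSlash w P Tm = P := funext hPT
  have hPTinv : famSlash w P Tm⁻¹ = P := by
    have h := famSlash_comp w P hPdeg Tm Tm⁻¹
    rw [hPT', mul_inv_cancel, famSlash_one w P hPdeg] at h
    exact h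
  have hQTT : famSlash w (famSlash w Q Tm⁻¹) Tm = Q := by
    rw [famSlash_comp w Q hQdeg Tm⁻¹ Tm, inv_mul_cancel, famSlash_one w Q hQdeg]
  have hQTT' : famSlash w (famSlash w Q Tm) Tm⁻¹ = Q := by
    rw [famSlash_comp w Q hQdeg Tm Tm⁻¹, mul_inv_cancel, famSlash_one w Q hQdeg]
  have hQS' : ∀ A, famSlash w Q Sm A = -Q A := fun A =>
    eq_neg_of_add_eq_zero_right (by have := hQS A; linear_combination this)
  have hQU2 : ∀ A, famSlash w Q (Um * Um) A = -famSlash w Q Tm⁻¹ A := by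
    intro A
    rw [UmUm, ← famSlash_comp w Q hQdeg Sm Tm⁻¹]
    show pSlash w (famSlash w Q Sm (A * (Tm⁻¹)⁻¹)) Tm⁻¹ = -famSlash w Q Tm⁻¹ A
    rw [hQS' (A * (Tm⁻¹)⁻¹), pSlash_neg]
    rfl
  have hQTinv : ∀ A, famSlash w Q Tm⁻¹ A = Q A + famSlash w Q Um A := by
    intro A
    have h := hQU A
    rw [hQU2 A] at h
    linear_combination -h
  have hQUm : ∀ A, famSlash w Q Um A = -Q A + famSlash w Q Tm⁻¹ A := by
    intro A
    linear_combination -hQTinv A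
  have hQT : famSlash w Q Tm = famSlash w (famSlash w Q Um) Sm := by
    rw [famSlash_comp w Q hQdeg Um Sm, UmSm, ← famSlash_comp w Q hQdeg nI Tm,
      famSlash_nI hQV]
  have hQUeq : famSlash w Q Um = famSlash w (famSlash w Q Tm) Sm := by
    rw [famSlash_comp w Q hQdeg Tm Sm]
    rfl
  -- the two main vanishing results
  have hA1 : pairG Γ w Rt (famSlash w (famSlash w P Sm) Tm⁻¹) Q = 0 := by
    have r5 : pairG Γ w Rt P (famSlash w Q Tm⁻¹) = pairG Γ w Rt P Q := by
      have h := invTinv P Q hPdeg hQdeg hPinv hQinv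
      rw [hPTinv] at h
      exact h
    calc pairG Γ w Rt (famSlash w (famSlash w P Sm) Tm⁻¹) Q
        = pairG Γ w Rt (famSlash w (famSlash w P Sm) Tm⁻¹)
            (famSlash w (famSlash w Q Tm) Tm⁻¹) := by rw [hQTT']
      _ = pairG Γ w Rt (famSlash w P Sm) (famSlash w Q Tm) :=
          invTinv _ _ (famSlash_deg w P Sm) (famSlash_deg w Q Tm)
            (famSlash_leftinv hPinv Sm) (famSlash_leftinv hQinv Tm)
      _ = pairG Γ w Rt (famSlash w P Sm) (famSlash w (famSlash w Q Um) Sm) := by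
          rw [← hQT]
      _ = pairG Γ w Rt P (famSlash w Q Um) :=
          invS _ _ hPdeg (famSlash_deg w Q Um) hPinv (famSlash_leftinv hQinv Um)
      _ = pairG Γ w Rt P (fun A => -Q A + famSlash w Q Tm⁻¹ A) :=
          pairG_congr_right Rt _ _ _ hQUm
      _ = pairG Γ w Rt P (fun A => -Q A) + pairG Γ w Rt P (famSlash w Q Tm⁻¹) :=
          pairG_add_right Rt _ _ _
      _ = -pairG Γ w Rt P Q + pairG Γ w Rt P Q := by
          rw [pairG_neg_right, r5]
      _ = 0 := by ring
  have hA2 : pairG Γ w Rt (famSlash w (famSlash w P Sm) Tm) Q = 0 := by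
    have s1 : pairG Γ w Rt (famSlash w P Sm) Q = -pairG Γ w Rt P Q := by
      calc pairG Γ w Rt (famSlash w P Sm) Q
          = pairG Γ w Rt (famSlash w P Sm) (fun A => -famSlash w Q Sm A) :=
            pairG_congr_right Rt _ _ _ (fun A => by rw [hQS' A, neg_neg])
        _ = -pairG Γ w Rt (famSlash w P Sm) (famSlash w Q Sm) := pairG_neg_right Rt _ _
        _ = -pairG Γ w Rt P Q := by rw [invS P Q hPdeg hQdeg hPinv hQinv]
    have s2 : pairG Γ w Rt (famSlash w P Sm) (famSlash w Q Um) = pairG Γ w Rt P Q := by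
      calc pairG Γ w Rt (famSlash w P Sm) (famSlash w Q Um)
          = pairG Γ w Rt (famSlash w P Sm) (famSlash w (famSlash w Q Tm) Sm) := by
            rw [hQUeq]
        _ = pairG Γ w Rt P (famSlash w Q Tm) :=
            invS _ _ hPdeg (famSlash_deg w Q Tm) hPinv (famSlash_leftinv hQinv Tm)
        _ = pairG Γ w Rt (famSlash w P Tm) (famSlash w Q Tm) := by rw [hPT']
        _ = pairG Γ w Rt P Q := invT P Q hPdeg hQdeg hPinv hQinv
    calc pairG Γ w Rt (famSlash w (famSlash w P Sm) Tm) Q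
        = pairG Γ w Rt (famSlash w (famSlash w P Sm) Tm)
            (famSlash w (famSlash w Q Tm⁻¹) Tm) := by rw [hQTT]
      _ = pairG Γ w Rt (famSlash w P Sm) (famSlash w Q Tm⁻¹) :=
          invT _ _ (famSlash_deg w P Sm) (famSlash_deg w Q Tm⁻¹)
            (famSlash_leftinv hPinv Sm) (famSlash_leftinv hQinv Tm⁻¹)
      _ = pairG Γ w Rt (famSlash w P Sm) (fun A => Q A + famSlash w Q Um A) :=
          pairG_congr_right Rt _ _ _ hQTinv
      _ = pairG Γ w Rt (famSlash w P Sm) Q +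
            pairG Γ w Rt (famSlash w P Sm) (famSlash w Q Um) := pairG_add_right Rt _ _ _
      _ = 0 := by rw [s1, s2]; ring
  -- assemble
  show pairG Γ w Rt (fun A => famSlash w (fun A => P A - famSlash w P Sm A) Tm A -
      famSlash w (fun A => P A - famSlash w P Sm A) Tm⁻¹ A) Q = 0
  calc pairG Γ w Rt (fun A => famSlash w (fun A => P A - famSlash w P Sm A) Tm A -
      famSlash w (fun A => P A - famSlash w P Sm A) Tm⁻¹ A) Q
      = pairG Γ w Rt (fun A => famSlash w (famSlash w P Sm) Tm⁻¹ A -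
          famSlash w (famSlash w P Sm) Tm A) Q := by
        apply pairG_congr_left
        intro A
        have e1 : famSlash w (fun A => P A - famSlash w P Sm A) Tm A =
            famSlash w P Tm A - famSlash w (famSlash w P Sm) Tm A := by
          show pSlash w (P (A * Tm⁻¹) - famSlash w P Sm (A * Tm⁻¹)) Tm = _
          rw [pSlash_sub]
          rfl
        have e2 : famSlash w (fun A => P A - famSlash w P Sm A) Tm⁻¹ A =
            famSlash w P Tm⁻¹ A - famSlash w (famSlash w P Sm) Tm⁻¹ A := by
          show pSlash w (P (A * Tm⁻¹⁻¹) - famSlash w P Sm (A * Tm⁻¹⁻¹)) Tm⁻¹ = _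
          rw [pSlash_sub]
          rfl
        rw [e1, e2, hPT A, congrFun hPTinv A]
        ring
    _ = pairG Γ w Rt (famSlash w (famSlash w P Sm) Tm⁻¹) Q -
          pairG Γ w Rt (famSlash w (famSlash w P Sm) Tm) Q := pairG_sub_left Rt _ _ _
    _ = 0 := by rw [hA1, hA2]; ring

end
end

section
/- Let Γ₁∞ ≤ Γ₁ be the subgroup generated by T and −I. Call a double coset c ∈ Γ\Γ₁/Γ₁∞ a cusp of Γ, and call a cusp [A] regular if the double cosets of A and of −A in Γ\Γ₁/⟨T⟩ are distinct, where ⟨T⟩ = {Tⁿ : n ∈ ℤ}. Then the complex dimension of C_w^Γ equals: the number of cusps of Γ, if k > 2 is even; the number of cusps of Γ minus 1, if k = 2; and the number of regular cusps of Γ, if k > 2 is odd. -/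
noncomputable section

open Matrix Polynomial Finset Filter MeasureTheory

/-- `Γ₁∞`, the subgroup generated by `T` and `-I`. -/
def GammaInf : Subgroup SL2Z := Subgroup.closure {Tm, negSL 1}

/-- the set of cusps of `Γ`: the double cosets `Γ\Γ₁/Γ₁∞`. -/
def Cusps (Γ : Subgroup SL2Z) := DoubleCoset.Quotient (Γ : Set SL2Z) (GammaInf : Set SL2Z)

/-- a cusp `[A]` is regular if the double cosets of `A` and `-A` in `Γ\Γ₁/⟨T⟩` are distinct. -/
def IsRegularCusp (Γ : Subgroup SL2Z) (c : Cusps Γ) : Prop :=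
  ∀ A : SL2Z, DoubleCoset.mk Γ GammaInf A = c →
    DoubleCoset.mk Γ (Subgroup.zpowers Tm) A ≠ DoubleCoset.mk Γ (Subgroup.zpowers Tm) (negSL A)

namespace S9

lemma Tm_eq : Tm = ModularGroup.T := Subtype.ext rfl
lemma Sm_eq : Sm = ModularGroup.S := Subtype.ext rfl

lemma coe_Tm_zpow (n : ℤ) : (Tm ^ n).1 = !![1, n; 0, 1] := by
  rw [Tm_eq]; exact ModularGroup.coe_T_zpow n

lemma negSL_coe (A : SL2Z) : (negSL A).1 = -A.1 := rfl

lemma mul_negSL (A B : SL2Z) : A * negSL B = negSL (A * B) := by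
  ext i j
  simp [negSL, Matrix.SpecialLinearGroup.coe_mul, Matrix.mul_neg]
  exact congrFun (congrFun (Matrix.mul_neg A.1 B.1) i) j

lemma negSL_mul (A B : SL2Z) : negSL A * B = negSL (A * B) := by
  ext i j
  simp [negSL, Matrix.SpecialLinearGroup.coe_mul, Matrix.neg_mul]
  exact congrFun (congrFun (Matrix.neg_mul A.1 B.1) i) j

lemma negSL_one_mul (A : SL2Z) : negSL 1 * A = negSL A := by rw [negSL_mul, one_mul]
lemma mul_negSL_one (A : SL2Z) : A * negSL 1 = negSL A := by rw [mul_negSL, mul_one]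

lemma negSL_negSL (A : SL2Z) : negSL (negSL A) = A := by
  ext i j; simp [negSL]

lemma negSL_one_sq : negSL 1 * negSL 1 = 1 := by
  rw [negSL_one_mul, negSL_negSL]

-- pSlash basic lemmas
lemma pSlash_add (w : ℕ) (p q : Polynomial ℂ) (g : SL2Z) :
    pSlash w (p + q) g = pSlash w p g + pSlash w q g := by
  unfold pSlash
  rw [← Finset.sum_add_distrib]
  refine Finset.sum_congr rfl fun n _ => ?_
  rw [coeff_add, C_add]; ring

lemma pSlash_smul (w : ℕ) (c : ℂ) (p : Polynomial ℂ) (g : SL2Z) :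
    pSlash w (c • p) g = c • pSlash w p g := by
  unfold pSlash
  rw [Finset.smul_sum]
  refine Finset.sum_congr rfl fun n _ => ?_
  rw [coeff_smul, smul_eq_mul, C_mul, smul_eq_C_mul]; ring

lemma pSlash_zero (w : ℕ) (g : SL2Z) : pSlash w 0 g = 0 := by
  unfold pSlash; simp

lemma mc_Tm00 : mc Tm 0 0 = 1 := by simp [mc, Tm]
lemma mc_Tm01 : mc Tm 0 1 = 1 := by simp [mc, Tm]
lemma mc_Tm10 : mc Tm 1 0 = 0 := by simp [mc, Tm]
lemma mc_Tm11 : mc Tm 1 1 = 1 := by simp [mc, Tm]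
lemma mc_Sm00 : mc Sm 0 0 = 0 := by simp [mc, Sm]
lemma mc_Sm01 : mc Sm 0 1 = -1 := by simp [mc, Sm]
lemma mc_Sm10 : mc Sm 1 0 = 1 := by simp [mc, Sm]
lemma mc_Sm11 : mc Sm 1 1 = 0 := by simp [mc, Sm]

lemma pSlash_Tm {w : ℕ} {p : Polynomial ℂ} (hp : p.degree ≤ (w : ℕ)) :
    pSlash w p Tm = p.comp (X + 1) := by
  unfold pSlash
  rw [mc_Tm00, mc_Tm01, mc_Tm10, mc_Tm11]
  simp only [Polynomial.C_1, one_mul, Polynomial.C_0, zero_mul, zero_add, one_pow, mul_one]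
  rw [Polynomial.comp_eq_sum_left]
  rw [Polynomial.sum_over_range' p (by simp) (w+1)
    (Nat.lt_succ_of_le (natDegree_le_of_degree_le hp))]

lemma pSlash_C_Tm (w : ℕ) (c : ℂ) : pSlash w (C c) Tm = C c := by
  rw [pSlash_Tm (degree_C_le.trans (by exact_mod_cast Nat.zero_le w))]
  simp


lemma pSlash_C (w : ℕ) (c : ℂ) (g : SL2Z) :
    pSlash w (C c) g = C c * (C (mc g 1 0) * X + C (mc g 1 1)) ^ w := by
  unfold pSlash
  rw [Finset.sum_eq_single 0]
  · simp
  · intro n _ hn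
    rw [coeff_C, if_neg hn]; simp
  · simp

variable {Γ : Subgroup SL2Z} {w : ℕ}

/-- the space `(V_w^Γ)^T` as a submodule. -/
def FixS (Γ : Subgroup SL2Z) (w : ℕ) : Submodule ℂ (SL2Z → Polynomial ℂ) where
  carrier := {P | MemV Γ w P ∧ ∀ A, famSlash w P Tm A = P A}
  zero_mem' := by
    refine ⟨⟨fun A => by simp, fun γ _ A => rfl, fun A => by simp⟩, fun A => ?_⟩
    simp [famSlash, pSlash_zero]
  add_mem' := by
    rintro P Q ⟨hP, hPT⟩ ⟨hQ, hQT⟩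
    refine ⟨⟨fun A => ?_, fun γ hγ A => ?_, fun A => ?_⟩, fun A => ?_⟩
    · exact (degree_add_le _ _).trans (max_le (hP.deg A) (hQ.deg A))
    · show P (γ * A) + Q (γ * A) = P A + Q A
      rw [hP.inv γ hγ A, hQ.inv γ hγ A]
    · show P (negSL A) + Q (negSL A) = (-1:ℂ)^w • (P A + Q A)
      rw [hP.parity A, hQ.parity A, smul_add]
    · show pSlash w (P (A * Tm⁻¹) + Q (A * Tm⁻¹)) Tm = P A + Q A
      rw [pSlash_add]
      exact congrArg₂ (· + ·) (hPT A) (hQT A)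
  smul_mem' := by
    rintro c P ⟨hP, hPT⟩
    refine ⟨⟨fun A => ?_, fun γ hγ A => ?_, fun A => ?_⟩, fun A => ?_⟩
    · exact (degree_smul_le _ _).trans (hP.deg A)
    · show c • P (γ * A) = c • P A
      rw [hP.inv γ hγ A]
    · show c • P (negSL A) = (-1:ℂ)^w • (c • P A)
      rw [hP.parity A, smul_comm]
    · show pSlash w (c • P (A * Tm⁻¹)) Tm = c • P A
      rw [pSlash_smul]
      exact congrArg (c • ·) (hPT A)

lemma FixS_memV {P : SL2Z → Polynomial ℂ} (h : P ∈ FixS Γ w) : MemV Γ w P := h.1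

lemma FixS_step {P : SL2Z → Polynomial ℂ} (h : P ∈ FixS Γ w) (A : SL2Z) :
    P (A * Tm) = (P A).comp (X + 1) := by
  have := h.2 (A * Tm)
  rw [famSlash, mul_inv_cancel_right] at this
  rw [← this, pSlash_Tm (h.1.deg A)]

/-- exists `h > 0` with `A T^h A⁻¹ ∈ Γ`. -/
lemma exists_width [Γ.FiniteIndex] (A : SL2Z) :
    ∃ h : ℕ, 0 < h ∧ A * Tm ^ (h : ℤ) * A⁻¹ ∈ Γ := by
  have : Finite (Quotient (QuotientGroup.rightRel Γ)) :=
    Finite.of_equiv _ (QuotientGroup.quotientRightRelEquivQuotientLeftRel Γ).symm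
  obtain ⟨m, n, hmn, heq⟩ := Finite.exists_ne_map_eq_of_infinite
    (fun n : ℕ => (Quotient.mk _ (A * Tm ^ (n : ℤ)) : Quotient (QuotientGroup.rightRel Γ)))
  wlog hlt : m < n generalizing m n
  · exact this n m hmn.symm heq.symm (by omega)
  have hrel : A * Tm ^ (n : ℤ) * (A * Tm ^ (m : ℤ))⁻¹ ∈ Γ := by
    rw [← QuotientGroup.rightRel_apply]
    exact Quotient.exact heq
  refine ⟨n - m, by omega, ?_⟩
  have : A * Tm ^ (n : ℤ) * (A * Tm ^ (m : ℤ))⁻¹ = A * Tm ^ ((n - m : ℕ) : ℤ) * A⁻¹ := by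
    rw [_root_.mul_inv_rev, ← _root_.zpow_neg]
    push_cast [Nat.cast_sub hlt.le]
    group
  rwa [this] at hrel

lemma comp_X_add_C_iter (p : Polynomial ℂ) (h : ℕ) :
    Nat.iterate (fun q : Polynomial ℂ => q.comp (X + 1)) h p = p.comp (X + C (h : ℂ)) := by
  induction h with
  | zero => simp
  | succ n ih =>
    rw [Function.iterate_succ_apply', ih, Polynomial.comp_assoc]
    congr 1
    push_cast
    simp [add_comp, add_assoc, add_comm]

lemma FixS_step_pow {P : SL2Z → Polynomial ℂ} (h : P ∈ FixS Γ w) (A : SL2Z) (n : ℕ) :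
    P (A * Tm ^ (n : ℤ)) = (P A).comp (X + C (n : ℂ)) := by
  rw [← comp_X_add_C_iter]
  induction n with
  | zero => simp
  | succ m ih =>
    have : A * Tm ^ ((m + 1 : ℕ) : ℤ) = A * Tm ^ (m : ℤ) * Tm := by
      push_cast; rw [_root_.zpow_add_one, mul_assoc]
    rw [this, FixS_step h, ih, Function.iterate_succ_apply']

/-- periodic polynomials are constant -/
lemma const_of_comp_eq {p : Polynomial ℂ} {h : ℕ} (hh : 0 < h)
    (he : p.comp (X + C (h : ℂ)) = p) : p = C (p.coeff 0) := by
  have key : ∀ n : ℕ, p.eval ((n * h : ℕ) : ℂ) = p.eval 0 := by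
    intro n
    induction n with
    | zero => simp
    | succ m ih =>
      have := congrArg (Polynomial.eval ((m * h : ℕ) : ℂ)) he
      rw [eval_comp] at this
      rw [← ih, ← this]
      simp only [eval_add, eval_X, eval_C]
      push_cast
      ring_nf
  have hroot : (p - C (p.eval 0)) = 0 := by
    apply Polynomial.eq_zero_of_infinite_isRoot
    refine Set.infinite_of_injective_forall_mem
      (f := fun n : ℕ => ((n * h : ℕ) : ℂ)) ?_ ?_
    · intro a b hab
      simp only at hab
      have : (a * h : ℕ) = (b * h : ℕ) := by exact_mod_cast hab
      exact Nat.eq_of_mul_eq_mul_right hh this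
    · intro n
      simp only [Set.mem_setOf_eq, IsRoot.def, eval_sub, eval_C, key n, sub_self]
  have hp : p = C (p.eval 0) := by
    have := sub_eq_zero.mp hroot
    exact this
  rw [hp]
  simp


/-- Every value of an element of `FixS` is a constant polynomial. -/
lemma FixS_const [Γ.FiniteIndex] {P : SL2Z → Polynomial ℂ} (h : P ∈ FixS Γ w) (A : SL2Z) :
    P A = C ((P A).coeff 0) := by
  obtain ⟨hh, hhpos, hmem⟩ := exists_width (Γ := Γ) A
  have key : P (A * Tm ^ (hh : ℤ)) = P A := by
    have : A * Tm ^ (hh : ℤ) = (A * Tm ^ (hh : ℤ) * A⁻¹) * A := by group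
    rw [this, h.1.inv _ hmem A]
  rw [FixS_step_pow h A hh] at key
  exact const_of_comp_eq hhpos key

/-- right multiplication by `Tm` preserves values of `FixS` elements. -/
lemma FixS_T_inv [Γ.FiniteIndex] {P : SL2Z → Polynomial ℂ} (h : P ∈ FixS Γ w) (A : SL2Z) :
    P (A * Tm) = P A := by
  rw [FixS_step h A, FixS_const h A]
  simp

/-- the subgroup of `g` with `P (A * g) = P A` for all `A`. -/
def invSub (P : SL2Z → Polynomial ℂ) : Subgroup SL2Z where
  carrier := {g | ∀ A, P (A * g) = P A}
  one_mem' := by intro A; rw [mul_one]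
  mul_mem' := by
    intro g k hg hk A
    rw [← mul_assoc, hk (A * g), hg A]
  inv_mem' := by
    intro g hg A
    have := hg (A * g⁻¹)
    rwa [inv_mul_cancel_right, eq_comm] at this

/-- the subgroup of `g` with `P (A * g) = ± P A` for all `A`. -/
def sgnSub (P : SL2Z → Polynomial ℂ) : Subgroup SL2Z where
  carrier := {g | ∀ A, P (A * g) = P A ∨ P (A * g) = -P A}
  one_mem' := by intro A; rw [mul_one]; left; rfl
  mul_mem' := by
    intro g k hg hk A
    rw [← mul_assoc]
    rcases hk (A * g) with h1 | h1 <;> rcases hg A with h2 | h2 <;>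
      rw [h1, h2] <;> simp
  inv_mem' := by
    intro g hg A
    have := hg (A * g⁻¹)
    rw [inv_mul_cancel_right] at this
    rcases this with h1 | h1
    · left; rw [h1]
    · right; rw [h1, neg_neg]

lemma Tm_mem_GammaInf : Tm ∈ GammaInf := Subgroup.subset_closure (by simp)
lemma negSL_one_mem_GammaInf : negSL 1 ∈ GammaInf := Subgroup.subset_closure (by simp)
lemma Tm_zpow_mem_GammaInf (n : ℤ) : Tm ^ n ∈ GammaInf := zpow_mem Tm_mem_GammaInf n

/-- classification of elements of `Γ₁∞`. -/
lemma mem_GammaInf_iff {g : SL2Z} :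
    g ∈ GammaInf ↔ ∃ n : ℤ, g = Tm ^ n ∨ g = negSL 1 * Tm ^ n := by
  constructor
  · intro hg
    let H : Subgroup SL2Z :=
      { carrier := {g | ∃ n : ℤ, g = Tm ^ n ∨ g = negSL 1 * Tm ^ n}
        one_mem' := ⟨0, Or.inl (by simp)⟩
        mul_mem' := by
          have zpa : ∀ n m : ℤ, Tm ^ n * Tm ^ m = Tm ^ (n + m) :=
            fun n m => (_root_.zpow_add Tm n m).symm
          rintro a b ⟨n, ha | ha⟩ ⟨m, hb | hb⟩
          · exact ⟨n + m, Or.inl (by rw [ha, hb, zpa])⟩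
          · refine ⟨n + m, Or.inr ?_⟩
            rw [ha, hb, ← mul_assoc, mul_negSL, mul_one, negSL_mul, ← negSL_one_mul (Tm ^ n * Tm ^ m), zpa]
          · exact ⟨n + m, Or.inr (by rw [ha, hb, mul_assoc, zpa])⟩
          · refine ⟨n + m, Or.inl ?_⟩
            rw [ha, hb, mul_assoc, ← mul_assoc (Tm ^ n), mul_negSL, mul_one, negSL_mul,
              negSL_mul, one_mul, negSL_negSL, zpa]
        inv_mem' := by
          have hinv : (negSL 1)⁻¹ = negSL 1 := by
            rw [inv_eq_iff_mul_eq_one, negSL_one_sq]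
          rintro a ⟨n, ha | ha⟩
          · exact ⟨-n, Or.inl (by rw [ha, ← _root_.zpow_neg])⟩
          · refine ⟨-n, Or.inr ?_⟩
            rw [ha, _root_.mul_inv_rev, ← _root_.zpow_neg, hinv, mul_negSL, mul_one,
              ← negSL_one_mul (Tm ^ (-n))] }
    have : GammaInf ≤ H := by
      rw [GammaInf, Subgroup.closure_le]
      rintro x (rfl | rfl)
      · exact ⟨1, Or.inl (by simp)⟩
      · exact ⟨0, Or.inr (by simp)⟩
    exact this hg
  · rintro ⟨n, rfl | rfl⟩
    · exact Tm_zpow_mem_GammaInf n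
    · exact mul_mem negSL_one_mem_GammaInf (Tm_zpow_mem_GammaInf n)

/-- `FixS` elements are invariant under right multiplication by powers of `Tm`. -/
lemma FixS_Tzpow_inv [Γ.FiniteIndex] {P : SL2Z → Polynomial ℂ} (h : P ∈ FixS Γ w)
    (A : SL2Z) (n : ℤ) : P (A * Tm ^ n) = P A := by
  have : Tm ∈ invSub P := fun B => FixS_T_inv h B
  exact (zpow_mem this n) A

lemma FixS_negSL [Γ.FiniteIndex] {P : SL2Z → Polynomial ℂ} (h : P ∈ FixS Γ w) (A : SL2Z) :
    P (A * negSL 1) = (-1 : ℂ) ^ w • P A := by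
  rw [mul_negSL_one, h.1.parity A]

/-- invariance/sign behaviour along a double coset. -/
lemma FixS_doset [Γ.FiniteIndex] {P : SL2Z → Polynomial ℂ} (h : P ∈ FixS Γ w)
    {A B : SL2Z} (hAB : DoubleCoset.mk Γ GammaInf A = DoubleCoset.mk Γ GammaInf B) :
    P B = P A ∨ P B = (-1 : ℂ) ^ w • P A := by
  obtain ⟨γ, hγ, t, ht, rfl⟩ := (DoubleCoset.eq _ _ _ _).mp hAB
  rw [mul_assoc, h.1.inv γ hγ]
  obtain ⟨n, rfl | rfl⟩ := mem_GammaInf_iff.mp ht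
  · left; exact FixS_Tzpow_inv h A n
  · right
    rw [← mul_assoc, FixS_Tzpow_inv h _ n] at *
    exact FixS_negSL h A

/-- invariance along a `Γ\Γ₁/⟨T⟩` class. -/
lemma FixS_dosetT [Γ.FiniteIndex] {P : SL2Z → Polynomial ℂ} (h : P ∈ FixS Γ w)
    {A B : SL2Z}
    (hAB : DoubleCoset.mk Γ (Subgroup.zpowers Tm) A = DoubleCoset.mk Γ (Subgroup.zpowers Tm) B) :
    P B = P A := by
  obtain ⟨γ, hγ, t, ht, rfl⟩ := (DoubleCoset.eq _ _ _ _).mp hAB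
  obtain ⟨n, rfl⟩ := ht
  rw [mul_assoc, h.1.inv γ hγ]
  exact FixS_Tzpow_inv h A n

lemma mkC_left {γ : SL2Z} (hγ : γ ∈ Γ) (A : SL2Z) :
    DoubleCoset.mk Γ GammaInf (γ * A) = DoubleCoset.mk Γ GammaInf A :=
  ((DoubleCoset.eq _ _ _ _).mpr ⟨γ, hγ, 1, one_mem _, by rw [mul_one]⟩).symm

lemma mkC_T (A : SL2Z) (n : ℤ) :
    DoubleCoset.mk Γ GammaInf (A * Tm ^ n) = DoubleCoset.mk Γ GammaInf A :=
  ((DoubleCoset.eq _ _ _ _).mpr ⟨1, one_mem _, Tm ^ n, Tm_zpow_mem_GammaInf n, by rw [one_mul]⟩).symm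

lemma mkC_neg (A : SL2Z) :
    DoubleCoset.mk Γ GammaInf (negSL A) = DoubleCoset.mk Γ GammaInf A :=
  ((DoubleCoset.eq _ _ _ _).mpr ⟨1, one_mem _, negSL 1, negSL_one_mem_GammaInf,
    by rw [one_mul, mul_negSL_one]⟩).symm

lemma mkT_left {γ : SL2Z} (hγ : γ ∈ Γ) (A : SL2Z) :
    DoubleCoset.mk Γ (Subgroup.zpowers Tm) (γ * A) = DoubleCoset.mk Γ (Subgroup.zpowers Tm) A :=
  ((DoubleCoset.eq _ _ _ _).mpr ⟨γ, hγ, 1, one_mem _, by rw [mul_one]⟩).symm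

lemma mkT_T (A : SL2Z) (n : ℤ) :
    DoubleCoset.mk Γ (Subgroup.zpowers Tm) (A * Tm ^ n) = DoubleCoset.mk Γ (Subgroup.zpowers Tm) A :=
  ((DoubleCoset.eq _ _ _ _).mpr ⟨1, one_mem _, Tm ^ n, Subgroup.mem_zpowers_iff.mpr ⟨n, rfl⟩, by rw [one_mul]⟩).symm

/-- a chosen representative of each cusp. -/
def crep (Γ : Subgroup SL2Z) (c : Cusps Γ) : SL2Z :=
  Quotient.out (show DoubleCoset.Quotient (Γ : Set SL2Z) (GammaInf : Set SL2Z) from c)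

lemma crep_spec (Γ : Subgroup SL2Z) (c : Cusps Γ) :
    DoubleCoset.mk Γ GammaInf (crep Γ c) = c :=
  DoubleCoset.out_eq' Γ GammaInf (show DoubleCoset.Quotient (Γ : Set SL2Z) (GammaInf : Set SL2Z) from c)

instance cuspsFinite [Γ.FiniteIndex] : Finite (Cusps Γ) := by
  have : Finite (Quotient (QuotientGroup.rightRel Γ)) :=
    Finite.of_equiv _ (QuotientGroup.quotientRightRelEquivQuotientLeftRel Γ).symm
  refine Finite.of_surjective
    (fun q : Quotient (QuotientGroup.rightRel Γ) =>
      Quotient.liftOn q (fun A => DoubleCoset.mk Γ GammaInf A) ?_) ?_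
  · intro x y hxy
    have hx : y * x⁻¹ ∈ Γ := QuotientGroup.rightRel_apply.mp hxy
    calc DoubleCoset.mk Γ GammaInf x = DoubleCoset.mk Γ GammaInf ((y * x⁻¹) * x) := (mkC_left hx x).symm
    _ = DoubleCoset.mk Γ GammaInf y := by rw [inv_mul_cancel_right]
  · intro c
    exact ⟨Quotient.mk _ (crep Γ c), crep_spec Γ c⟩

lemma degree_C_le_w (c : ℂ) : (C c).degree ≤ (w : ℕ) :=
  degree_C_le.trans (by exact_mod_cast Nat.zero_le w)

lemma Tm_inv_eq : Tm⁻¹ = Tm ^ (-1 : ℤ) := (_root_.zpow_neg_one Tm).symm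

/-- constants on cusps belong to `FixS` (given the right parity behaviour of the values). -/
lemma const_mem_FixS (φ : SL2Z → ℂ)
    (hl : ∀ γ ∈ Γ, ∀ A, φ (γ * A) = φ A)
    (ht : ∀ A, φ (A * Tm⁻¹) = φ A)
    (hp : ∀ A, φ (negSL A) = (-1 : ℂ) ^ w * φ A) :
    (fun A => C (φ A)) ∈ FixS Γ w := by
  refine ⟨⟨fun A => degree_C_le_w _, fun γ hγ A => by rw [hl γ hγ A],
    fun A => ?_⟩, fun A => ?_⟩
  · rw [hp A, smul_C, smul_eq_mul]
  · show pSlash w (C (φ (A * Tm⁻¹))) Tm = C (φ A)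
    rw [pSlash_C_Tm, ht A]

/-- for even `w`, `FixS` is isomorphic to functions on cusps. -/
def fixEquivEven (Γ : Subgroup SL2Z) (w : ℕ) [Γ.FiniteIndex] (hwe : Even w) :
    ↥(FixS Γ w) ≃ₗ[ℂ] (Cusps Γ → ℂ) where
  toFun P := fun c => (P.1 (crep Γ c)).coeff 0
  map_add' P Q := funext fun c => by
    show ((P.1 + Q.1) (crep Γ c)).coeff 0 = _
    simp [coeff_add]
  map_smul' a P := funext fun c => by
    show ((a • P.1) (crep Γ c)).coeff 0 = _
    simp [coeff_smul]
  invFun f := ⟨fun A => C (f (DoubleCoset.mk Γ GammaInf A)),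
    const_mem_FixS _ (fun γ hγ A => by rw [mkC_left hγ])
      (fun A => by rw [Tm_inv_eq, mkC_T])
      (fun A => by rw [mkC_neg, hwe.neg_one_pow, one_mul])⟩
  left_inv P := by
    apply Subtype.ext
    funext A
    show C ((P.1 (crep Γ (DoubleCoset.mk Γ GammaInf A))).coeff 0) = P.1 A
    rw [← FixS_const P.2]
    rcases FixS_doset P.2 (crep_spec Γ (DoubleCoset.mk Γ GammaInf A)) with h | h
    · exact h.symm
    · rw [h, hwe.neg_one_pow, one_smul]
  right_inv f := by
    funext c
    show (C (f (DoubleCoset.mk Γ GammaInf (crep Γ c)))).coeff 0 = f c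
    rw [crep_spec, coeff_C_zero]

lemma finrank_FixS_even [Γ.FiniteIndex] (hwe : Even w) :
    Module.finrank ℂ (FixS Γ w) = Nat.card (Cusps Γ) := by
  letI : Fintype (Cusps Γ) := Fintype.ofFinite _
  rw [(fixEquivEven Γ w hwe).finrank_eq, Module.finrank_pi, Nat.card_eq_fintype_card]



open scoped Classical

/-- sign of `A` relative to the chosen representative of its cusp. -/
def sgn (Γ : Subgroup SL2Z) (A : SL2Z) : ℂ :=
  if DoubleCoset.mk Γ (Subgroup.zpowers Tm) A
      = DoubleCoset.mk Γ (Subgroup.zpowers Tm) (crep Γ (DoubleCoset.mk Γ GammaInf A)) then 1 else -1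

lemma sgn_left {γ : SL2Z} (hγ : γ ∈ Γ) (A : SL2Z) : sgn Γ (γ * A) = sgn Γ A := by
  unfold sgn
  rw [mkT_left hγ, mkC_left hγ]

lemma sgn_T (A : SL2Z) (n : ℤ) : sgn Γ (A * Tm ^ n) = sgn Γ A := by
  unfold sgn
  rw [mkT_T, mkC_T]

lemma sgn_eq_one_or (A : SL2Z) : sgn Γ A = 1 ∨ sgn Γ A = -1 := by
  unfold sgn; split <;> simp

/-- dichotomy of signs at a regular cusp. -/
lemma sgn_dichotomy {A : SL2Z} (hreg : IsRegularCusp Γ (DoubleCoset.mk Γ GammaInf A)) :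
    (sgn Γ A = 1 ∧ sgn Γ (negSL A) = -1) ∨ (sgn Γ A = -1 ∧ sgn Γ (negSL A) = 1) := by
  set R := crep Γ (DoubleCoset.mk Γ GammaInf A) with hR
  have hmkR : DoubleCoset.mk Γ GammaInf R = DoubleCoset.mk Γ GammaInf A := crep_spec Γ _
  have hRne : DoubleCoset.mk Γ (Subgroup.zpowers Tm) R
      ≠ DoubleCoset.mk Γ (Subgroup.zpowers Tm) (negSL R) := hreg R hmkR
  obtain ⟨γ, hγ, t, ht, hA⟩ := (DoubleCoset.eq _ _ _ _).mp hmkR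
  have hsgnneg : sgn Γ (negSL A) =
      (if DoubleCoset.mk Γ (Subgroup.zpowers Tm) (negSL A)
        = DoubleCoset.mk Γ (Subgroup.zpowers Tm) R then (1:ℂ) else -1) := by
    unfold sgn
    rw [mkC_neg, ← hR]
  have hsgnA : sgn Γ A =
      (if DoubleCoset.mk Γ (Subgroup.zpowers Tm) A
        = DoubleCoset.mk Γ (Subgroup.zpowers Tm) R then (1:ℂ) else -1) := by
    unfold sgn; rw [← hR]
  obtain ⟨n, rfl | rfl⟩ := mem_GammaInf_iff.mp ht
  · -- A = γ * R * T^n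
    have h1 : DoubleCoset.mk Γ (Subgroup.zpowers Tm) A = DoubleCoset.mk Γ (Subgroup.zpowers Tm) R := by
      rw [hA, mul_assoc, mkT_left hγ, mkT_T]
    have h2 : DoubleCoset.mk Γ (Subgroup.zpowers Tm) (negSL A)
        = DoubleCoset.mk Γ (Subgroup.zpowers Tm) (negSL R) := by
      rw [hA, mul_assoc, ← mul_negSL, mkT_left hγ, ← negSL_mul, mkT_T]
    left
    constructor
    · rw [hsgnA, if_pos h1]
    · rw [hsgnneg, if_neg]
      rw [h2]
      exact fun hc => hRne hc.symm
  · -- A = γ * R * (-T^n), i.e. A = γ * (negSL R * T^n)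
    have hA' : A = γ * (negSL R * Tm ^ n) := by
      rw [hA, mul_assoc, ← mul_assoc R, mul_negSL_one]
    have h1 : DoubleCoset.mk Γ (Subgroup.zpowers Tm) A
        = DoubleCoset.mk Γ (Subgroup.zpowers Tm) (negSL R) := by
      rw [hA', mkT_left hγ, mkT_T]
    have h2 : DoubleCoset.mk Γ (Subgroup.zpowers Tm) (negSL A)
        = DoubleCoset.mk Γ (Subgroup.zpowers Tm) R := by
      rw [hA', ← mul_negSL, mkT_left hγ, ← negSL_mul, negSL_negSL, mkT_T]
    right
    constructor
    · rw [hsgnA, if_neg]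
      rw [h1]
      exact fun hc => hRne hc.symm
    · rw [hsgnneg, if_pos h2]

lemma FixS_zero_irregular [Γ.FiniteIndex] (hwo : Odd w) {P : SL2Z → Polynomial ℂ}
    (h : P ∈ FixS Γ w) {A : SL2Z} (hirr : ¬ IsRegularCusp Γ (DoubleCoset.mk Γ GammaInf A)) :
    P A = 0 := by
  unfold IsRegularCusp at hirr
  push_neg at hirr
  obtain ⟨B, hB, hBT⟩ := hirr
  have hPB : P B = 0 := by
    have h1 : P (negSL B) = P B := FixS_dosetT h hBT
    have h2 : P (negSL B) = (-1 : ℂ) ^ w • P B := h.1.parity B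
    rw [hwo.neg_one_pow] at h2
    have hP : P B = -P B := by
      conv_lhs => rw [← h1, h2, neg_smul, one_smul]
    have h3 : P B + P B = 0 := by
      nth_rewrite 2 [hP]
      exact add_neg_cancel _
    exact add_self_eq_zero.mp h3
  rcases FixS_doset h hB with h4 | h4
  · rw [h4, hPB]
  · rw [h4, hPB, smul_zero]

lemma FixS_rep_rel [Γ.FiniteIndex] (hwo : Odd w) {P : SL2Z → Polynomial ℂ}
    (h : P ∈ FixS Γ w) {A : SL2Z} (hreg : IsRegularCusp Γ (DoubleCoset.mk Γ GammaInf A)) :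
    P A = sgn Γ A • P (crep Γ (DoubleCoset.mk Γ GammaInf A)) := by
  set R := crep Γ (DoubleCoset.mk Γ GammaInf A) with hR
  have hmkR : DoubleCoset.mk Γ GammaInf R = DoubleCoset.mk Γ GammaInf A := crep_spec Γ _
  have hRne := hreg R hmkR
  obtain ⟨γ, hγ, t, ht, hA⟩ := (DoubleCoset.eq _ _ _ _).mp hmkR
  have hsgnA : sgn Γ A =
      (if DoubleCoset.mk Γ (Subgroup.zpowers Tm) A
        = DoubleCoset.mk Γ (Subgroup.zpowers Tm) R then (1:ℂ) else -1) := by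
    unfold sgn; rw [← hR]
  obtain ⟨n, rfl | rfl⟩ := mem_GammaInf_iff.mp ht
  · have h1 : DoubleCoset.mk Γ (Subgroup.zpowers Tm) A = DoubleCoset.mk Γ (Subgroup.zpowers Tm) R := by
      rw [hA, mul_assoc, mkT_left hγ, mkT_T]
    rw [hsgnA, if_pos h1, one_smul, hA, mul_assoc, h.1.inv γ hγ, FixS_Tzpow_inv h]
  · have hA' : A = γ * (negSL R * Tm ^ n) := by
      rw [hA, mul_assoc, ← mul_assoc R, mul_negSL_one]
    have h1 : DoubleCoset.mk Γ (Subgroup.zpowers Tm) A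
        = DoubleCoset.mk Γ (Subgroup.zpowers Tm) (negSL R) := by
      rw [hA', mkT_left hγ, mkT_T]
    rw [hsgnA, if_neg (by rw [h1]; exact fun hc => hRne hc.symm)]
    rw [hA', h.1.inv γ hγ, negSL_mul, h.1.parity, FixS_Tzpow_inv h, hwo.neg_one_pow]

/-- for odd `w`, `FixS` is isomorphic to functions on regular cusps. -/
def fixEquivOdd (Γ : Subgroup SL2Z) (w : ℕ) [Γ.FiniteIndex] (hwo : Odd w) :
    ↥(FixS Γ w) ≃ₗ[ℂ] ({c : Cusps Γ // IsRegularCusp Γ c} → ℂ) where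
  toFun P := fun c => (P.1 (crep Γ c.1)).coeff 0
  map_add' P Q := funext fun c => by
    show ((P.1 + Q.1) (crep Γ c.1)).coeff 0 = _
    simp [coeff_add]
  map_smul' a P := funext fun c => by
    show ((a • P.1) (crep Γ c.1)).coeff 0 = _
    simp [coeff_smul]
  invFun f := ⟨fun A => C (if h : IsRegularCusp Γ (DoubleCoset.mk Γ GammaInf A)
      then sgn Γ A * f ⟨DoubleCoset.mk Γ GammaInf A, h⟩ else 0),
    const_mem_FixS _
      (fun γ hγ A => by simp only [mkC_left hγ, sgn_left hγ])
      (fun A => by simp only [Tm_inv_eq, mkC_T, sgn_T])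
      (fun A => by
        simp only [mkC_neg, hwo.neg_one_pow, neg_one_mul]
        by_cases hreg : IsRegularCusp Γ (DoubleCoset.mk Γ GammaInf A)
        · rw [dif_pos hreg, dif_pos hreg]
          rcases sgn_dichotomy hreg with ⟨h1, h2⟩ | ⟨h1, h2⟩ <;> rw [h1, h2] <;> ring
        · rw [dif_neg hreg, dif_neg hreg, neg_zero])⟩
  left_inv P := by
    apply Subtype.ext
    funext A
    show C (if h : IsRegularCusp Γ (DoubleCoset.mk Γ GammaInf A)
      then sgn Γ A * (P.1 (crep Γ (DoubleCoset.mk Γ GammaInf A))).coeff 0 else 0) = P.1 A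
    by_cases hreg : IsRegularCusp Γ (DoubleCoset.mk Γ GammaInf A)
    · rw [dif_pos hreg, FixS_rep_rel hwo P.2 hreg,
        FixS_const P.2 (crep Γ (DoubleCoset.mk Γ GammaInf A))]
      rw [coeff_C_zero, smul_C, smul_eq_mul]
    · rw [dif_neg hreg, FixS_zero_irregular hwo P.2 hreg, C_0]
  right_inv f := by
    funext c
    obtain ⟨c0, hreg⟩ := c
    show (C (if h : IsRegularCusp Γ (DoubleCoset.mk Γ GammaInf (crep Γ c0))
      then sgn Γ (crep Γ c0) * f ⟨DoubleCoset.mk Γ GammaInf (crep Γ c0), h⟩ else 0)).coeff 0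
      = f ⟨c0, hreg⟩
    have hmk : DoubleCoset.mk Γ GammaInf (crep Γ c0) = c0 := crep_spec Γ c0
    have hreg' : IsRegularCusp Γ (DoubleCoset.mk Γ GammaInf (crep Γ c0)) := by rw [hmk]; exact hreg
    rw [dif_pos hreg', coeff_C_zero]
    have hsgn : sgn Γ (crep Γ c0) = 1 := by
      unfold sgn
      rw [if_pos]
      rw [hmk]
    have : (⟨DoubleCoset.mk Γ GammaInf (crep Γ c0), hreg'⟩ :
        {c : Cusps Γ // IsRegularCusp Γ c}) = ⟨c0, hreg⟩ := Subtype.ext hmk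
    rw [hsgn, this, one_mul]

lemma finrank_FixS_odd [Γ.FiniteIndex] (hwo : Odd w) :
    Module.finrank ℂ (FixS Γ w) = Nat.card {c : Cusps Γ // IsRegularCusp Γ c} := by
  letI : Fintype {c : Cusps Γ // IsRegularCusp Γ c} := Fintype.ofFinite _
  rw [(fixEquivOdd Γ w hwo).finrank_eq, Module.finrank_pi, Nat.card_eq_fintype_card]

instance fixFinite [Γ.FiniteIndex] : FiniteDimensional ℂ (FixS Γ w) := by
  rcases Nat.even_or_odd w with hwe | hwo
  · letI : Fintype (Cusps Γ) := Fintype.ofFinite _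
    exact Module.Finite.equiv (fixEquivEven Γ w hwe).symm
  · letI : Fintype {c : Cusps Γ // IsRegularCusp Γ c} := Fintype.ofFinite _
    exact Module.Finite.equiv (fixEquivOdd Γ w hwo).symm

lemma coe_Sm : Sm.1 = !![0,-1;1,0] := rfl

lemma Sm_mul_coe (A : SL2Z) :
    (Sm * A).1 = !![-A.1 1 0, -A.1 1 1; A.1 0 0, A.1 0 1] := by
  rw [Matrix.SpecialLinearGroup.coe_mul, coe_Sm]
  rw [show A.1 = !![A.1 0 0, A.1 0 1; A.1 1 0, A.1 1 1] from Matrix.eta_fin_two A.1]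
  rw [Matrix.mul_fin_two]
  simp

lemma Tmz_mul_coe (n : ℤ) (A : SL2Z) :
    (Tm ^ n * A).1 = !![A.1 0 0 + n * A.1 1 0, A.1 0 1 + n * A.1 1 1;
      A.1 1 0, A.1 1 1] := by
  rw [Matrix.SpecialLinearGroup.coe_mul, coe_Tm_zpow]
  rw [show A.1 = !![A.1 0 0, A.1 0 1; A.1 1 0, A.1 1 1] from Matrix.eta_fin_two A.1]
  rw [Matrix.mul_fin_two]
  simp

lemma det_rel (A : SL2Z) : A.1 0 0 * A.1 1 1 - A.1 0 1 * A.1 1 0 = 1 := by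
  have := A.2
  rwa [Matrix.det_fin_two] at this

/-- `SL₂(ℤ)` is generated by `S` and `T`. -/
lemma closure_Sm_Tm : Subgroup.closure ({Sm, Tm} : Set SL2Z) = ⊤ := by
  set H := Subgroup.closure ({Sm, Tm} : Set SL2Z) with hH
  have hS : Sm ∈ H := Subgroup.subset_closure (by simp)
  have hT : Tm ∈ H := Subgroup.subset_closure (by simp)
  rw [eq_top_iff]
  rintro A -
  suffices key : ∀ n : ℕ, ∀ A : SL2Z, (A.1 1 0).natAbs ≤ n → A ∈ H from
    key (A.1 1 0).natAbs A le_rfl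
  intro n
  induction n with
  | zero =>
    intro A hA
    have hc : A.1 1 0 = 0 := by omega
    have hdet := det_rel A
    rw [hc, mul_zero, sub_zero] at hdet
    rcases Int.mul_eq_one_iff_eq_one_or_neg_one.mp hdet with ⟨h1, h2⟩ | ⟨h1, h2⟩
    · have : A = Tm ^ (A.1 0 1) := by
        apply Subtype.ext
        rw [coe_Tm_zpow]
        ext i j
        fin_cases i <;> fin_cases j <;> simp [h1, h2, hc]
      rw [this]
      exact zpow_mem hT _
    · have : A = Sm * Sm * Tm ^ (-A.1 0 1) := by
        apply Subtype.ext
        rw [Matrix.SpecialLinearGroup.coe_mul, Matrix.SpecialLinearGroup.coe_mul,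
          coe_Sm, coe_Tm_zpow, Matrix.mul_fin_two, Matrix.mul_fin_two]
        ext i j
        fin_cases i <;> fin_cases j <;> simp [h1, h2, hc]
      rw [this]
      exact mul_mem (mul_mem hS hS) (zpow_mem hT _)
  | succ n ih =>
    intro A hA
    by_cases hc : A.1 1 0 = 0
    · exact ih A (by omega)
    set a := A.1 0 0 with ha
    set c := A.1 1 0 with hcc
    set q : ℤ := a / c with hq
    set B := Sm * (Tm ^ (-q) * A) with hB
    have hBc : B.1 1 0 = a % c := by
      rw [hB, Sm_mul_coe, Tmz_mul_coe]
      simp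
      rw [Int.emod_def]
      ring
    have hlt : (B.1 1 0).natAbs ≤ n := by
      rw [hBc]
      have h1 : 0 ≤ a % c := Int.emod_nonneg a hc
      have h2 : a % c < |c| := Int.emod_lt_abs a hc
      have h3 : |c| = (c.natAbs : ℤ) := Int.abs_eq_natAbs c
      have h4 : ((a % c).natAbs : ℤ) = a % c := Int.natAbs_of_nonneg h1
      have : ((a % c).natAbs : ℤ) < (c.natAbs : ℤ) := by rw [h4]; omega
      have h5 : (a % c).natAbs < c.natAbs := by exact_mod_cast this
      omega
    have hBH : B ∈ H := ih B hlt
    have hrec : A = Tm ^ q * (Sm⁻¹ * B) := by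
      rw [hB]
      group
    rw [hrec]
    exact mul_mem (zpow_mem hT _) (mul_mem (inv_mem hS) hBH)


lemma pSlash_C_Sm (c : ℂ) : pSlash w (C c) Sm = C c * X ^ w := by
  rw [pSlash_C, mc_Sm10, mc_Sm11]
  simp

/-- the coboundary map `P ↦ P|(1-S)` as a linear map. -/
def Lmap (w : ℕ) : (SL2Z → Polynomial ℂ) →ₗ[ℂ] (SL2Z → Polynomial ℂ) where
  toFun P := fun A => P A - famSlash w P Sm A
  map_add' P Q := funext fun A => by
    show (P A + Q A) - pSlash w ((P + Q) (A * Sm⁻¹)) Sm = _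
    show (P A + Q A) - pSlash w (P (A * Sm⁻¹) + Q (A * Sm⁻¹)) Sm = _
    rw [pSlash_add]
    show _ = (P A - pSlash w (P (A * Sm⁻¹)) Sm) + (Q A - pSlash w (Q (A * Sm⁻¹)) Sm)
    ring
  map_smul' c P := funext fun A => by
    show (c • P A) - pSlash w ((c • P) (A * Sm⁻¹)) Sm = _
    show (c • P A) - pSlash w (c • (P (A * Sm⁻¹))) Sm = _
    rw [pSlash_smul]
    show _ = c • (P A - pSlash w (P (A * Sm⁻¹)) Sm)
    rw [smul_sub]

lemma memC_eq :
    {Q : SL2Z → Polynomial ℂ | MemC Γ w Q} = ((FixS Γ w).map (Lmap w) : Set _) := by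
  ext Q
  constructor
  · rintro ⟨P, hV, hT, hQ⟩
    exact ⟨P, ⟨hV, hT⟩, funext fun A => (hQ A).symm⟩
  · rintro ⟨P, ⟨hV, hT⟩, rfl⟩
    exact ⟨P, hV, hT, fun A => rfl⟩

/-- the coboundary map restricted to `FixS`. -/
def phi (Γ : Subgroup SL2Z) (w : ℕ) : ↥(FixS Γ w) →ₗ[ℂ] (SL2Z → Polynomial ℂ) :=
  (Lmap w) ∘ₗ (FixS Γ w).subtype

lemma range_phi : LinearMap.range (phi Γ w) = (FixS Γ w).map (Lmap w) := by
  rw [phi, LinearMap.range_comp, Submodule.range_subtype]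

lemma ker_phi_pos [Γ.FiniteIndex] (hw : 0 < w) : LinearMap.ker (phi Γ w) = ⊥ := by
  rw [eq_bot_iff]
  rintro ⟨P, hP⟩ hker
  have h0 : ∀ A, P A - famSlash w P Sm A = 0 := fun A =>
    congrFun (LinearMap.mem_ker.mp hker) A
  have key : ∀ A, P A = 0 := by
    intro A
    have h1 : P A = pSlash w (P (A * Sm⁻¹)) Sm := by
      have := h0 A
      rw [sub_eq_zero] at this
      exact this
    rw [FixS_const hP (A * Sm⁻¹), pSlash_C_Sm] at h1
    have hcoeff : (P A).coeff w = (P (A * Sm⁻¹)).coeff 0 := by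
      rw [h1, coeff_C_mul, coeff_X_pow, if_pos rfl, mul_one]
    rw [FixS_const hP A, coeff_C, if_neg (Nat.pos_iff_ne_zero.mp hw)] at hcoeff
    rw [h1, ← hcoeff, C_0, zero_mul]
  rw [Submodule.mem_bot]
  apply Subtype.ext
  show P = 0
  funext A
  exact key A

/-- kernel in weight `0` is the constants. -/
def kerEquiv (Γ : Subgroup SL2Z) [Γ.FiniteIndex] :
    ↥(LinearMap.ker (phi Γ 0)) ≃ₗ[ℂ] ℂ where
  toFun p := (p.1.1 1).coeff 0
  map_add' p q := by simp
  map_smul' c p := by simp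
  invFun c := ⟨⟨fun _ => C c,
      const_mem_FixS (w := 0) _ (fun _ _ _ => rfl) (fun _ => rfl)
        (fun _ => by rw [pow_zero, one_mul])⟩, by
    rw [LinearMap.mem_ker]
    funext A
    show C c - famSlash 0 (fun _ => C c) Sm A = 0
    show C c - pSlash 0 (C c) Sm = 0
    rw [pSlash_C_Sm, pow_zero, mul_one, sub_self]⟩
  left_inv p := by
    obtain ⟨⟨P, hP⟩, hker⟩ := p
    have hSm : ∀ A, P (A * Sm⁻¹) = P A := by
      intro A
      have h0 : P A - famSlash 0 P Sm A = 0 := congrFun (LinearMap.mem_ker.mp hker) A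
      have h1 : P A = famSlash 0 P Sm A := sub_eq_zero.mp h0
      rw [show famSlash 0 P Sm A = pSlash 0 (P (A * Sm⁻¹)) Sm from rfl,
        FixS_const hP (A * Sm⁻¹), pSlash_C_Sm, pow_zero, mul_one] at h1
      rw [FixS_const hP (A * Sm⁻¹)]
      exact h1.symm
    have hSmem : Sm ∈ invSub P := by
      intro A
      have := hSm (A * Sm)
      rwa [mul_inv_cancel_right, eq_comm] at this
    have hTmem : Tm ∈ invSub P := fun A => FixS_T_inv hP A
    have htop : invSub P = ⊤ := by
      rw [eq_top_iff, ← closure_Sm_Tm, Subgroup.closure_le]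
      rintro x (rfl | rfl)
      · exact hSmem
      · exact hTmem
    have hval : ∀ A, P A = P 1 := by
      intro A
      have : A ∈ invSub P := htop.symm ▸ Subgroup.mem_top A
      have := this 1
      rwa [one_mul] at this
    apply Subtype.ext
    apply Subtype.ext
    funext A
    show C ((P 1).coeff 0) = P A
    rw [hval A]
    exact (FixS_const hP 1).symm
  right_inv c := by
    show (C c).coeff 0 = c
    exact coeff_C_zero

end S9

set_option synthInstance.maxHeartbeats 1000000 in
set_option maxHeartbeats 1000000 in
/-- `dim C_w^Γ` equals the number of cusps if `k > 2` is even,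
the number of cusps minus 1 if `k = 2`, and the number of regular cusps if `k > 2` is odd. -/
theorem statement9 (Γ : Subgroup SL2Z) [Γ.FiniteIndex] (k : ℤ) (hk : 2 ≤ k)
    (w : ℕ) (hw : (w : ℤ) = k - 2) :
    (2 < k → Even k →
      Module.finrank ℂ (Submodule.span ℂ {Q : SL2Z → Polynomial ℂ | MemC Γ w Q})
        = Nat.card (Cusps Γ)) ∧
    (k = 2 →
      Module.finrank ℂ (Submodule.span ℂ {Q : SL2Z → Polynomial ℂ | MemC Γ w Q}) + 1
        = Nat.card (Cusps Γ)) ∧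
    (2 < k → Odd k →
      Module.finrank ℂ (Submodule.span ℂ {Q : SL2Z → Polynomial ℂ | MemC Γ w Q})
        = Nat.card {c : Cusps Γ // IsRegularCusp Γ c}) := by
  have hsp : Submodule.span ℂ {Q : SL2Z → Polynomial ℂ | MemC Γ w Q}
      = (S9.FixS Γ w).map (S9.Lmap w) := by
    rw [S9.memC_eq, Submodule.span_eq]
  have hrn := LinearMap.finrank_range_add_finrank_ker (S9.phi Γ w)
  rw [S9.range_phi] at hrn
  refine ⟨?_, ?_, ?_⟩
  · intro hk2 hke
    have hw0 : 0 < w := by omega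
    have hwe : Even w := by
      rw [← Int.even_coe_nat, hw, Int.even_sub]
      simp [hke]
    rw [S9.ker_phi_pos hw0, finrank_bot] at hrn
    rw [hsp, ← S9.finrank_FixS_even hwe]
    omega
  · intro hk2
    have hw0 : w = 0 := by omega
    subst hw0
    have hker : Module.finrank ℂ (LinearMap.ker (S9.phi Γ 0)) = 1 := by
      rw [(S9.kerEquiv Γ).finrank_eq, Module.finrank_self]
    rw [hker] at hrn
    rw [hsp, ← S9.finrank_FixS_even (Even.zero)]
    omega
  · intro hk2 hko
    have hw0 : 0 < w := by omega
    have hwo : Odd w := by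
      rw [← Int.odd_coe_nat, hw, Int.odd_sub]
      simp [hko]
    rw [S9.ker_phi_pos hw0, finrank_bot] at hrn
    rw [hsp, ← S9.finrank_FixS_odd hwo]
    omega

end
end

section
/- Let k ≥ 2 be even, N ≥ 1, and Γ = Γ₀(N) = {[[a,b],[c,d]] ∈ SL₂(ℤ) : c ≡ 0 mod N} (note εΓ₀(N)ε = Γ₀(N)). Then (C_w^Γ)^− = {0} if and only if N = 2^e·N' with N' odd and squarefree and 0 ≤ e ≤ 3. -/
noncomputable section

open Matrix Polynomial Finset Filter MeasureTheory

-- ===== auxiliary infrastructure =====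

open CongruenceSubgroup

lemma entry_mul (X Y : SL2Z) (i j : Fin 2) :
    (X * Y).1 i j = X.1 i 0 * Y.1 0 j + X.1 i 1 * Y.1 1 j := by
  show (X.1 * Y.1) i j = _
  rw [Matrix.mul_apply, Fin.sum_univ_two]

lemma inv_entries (C : SL2Z) :
    (C⁻¹).1 = !![C.1 1 1, -C.1 0 1; -C.1 1 0, C.1 0 0] := by
  rw [Matrix.SpecialLinearGroup.SL2_inv_expl]
  ext i j
  fin_cases i <;> fin_cases j <;> rfl

@[simp] lemma epsConj_entries (A : SL2Z) :
    (epsConj A).1 = !![A.1 0 0, -A.1 0 1; -A.1 1 0, A.1 1 1] := rfl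

lemma SL2_ext {A B : SL2Z} (h : ∀ i j, A.1 i j = B.1 i j) : A = B := by
  apply Subtype.ext
  ext i j
  exact h i j

lemma epsConj_mul (X Y : SL2Z) : epsConj (X * Y) = epsConj X * epsConj Y := by
  apply SL2_ext
  intro i j
  fin_cases i <;> fin_cases j <;>
    simp [entry_mul, epsConj_entries] <;> ring

lemma epsConj_epsConj (A : SL2Z) : epsConj (epsConj A) = A := by
  apply SL2_ext
  intro i j
  fin_cases i <;> fin_cases j <;> simp [epsConj]

lemma epsConj_mem_Gamma0 {N : ℕ} {γ : SL2Z} (h : γ ∈ Gamma0 N) :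
    epsConj γ ∈ Gamma0 N := by
  rw [Gamma0_mem] at h ⊢
  show ((((epsConj γ).1 1 0 : ℤ) : ZMod N)) = 0
  have : (epsConj γ).1 1 0 = -(γ.1 1 0) := by simp [epsConj]
  rw [this]
  push_cast
  simp only [neg_eq_zero]
  exact h

def Tn (n : ℤ) : SL2Z := ⟨!![1, n; 0, 1], by simp [Matrix.det_fin_two_of]⟩

lemma Tn_mul (m n : ℤ) : Tn m * Tn n = Tn (m + n) := by
  apply SL2_ext
  intro i j
  fin_cases i <;> fin_cases j <;> simp only [entry_mul] <;> simp [Tn] <;> ring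

lemma Tm_eq : Tm = Tn 1 := rfl

lemma Tm_zpow (n : ℤ) : Tm ^ n = Tn n := by
  induction n using Int.induction_on with
  | zero => apply SL2_ext; intro i j; fin_cases i <;> fin_cases j <;> simp [Tn]
  | succ k ih => rw [_root_.zpow_add_one, ih, Tm_eq, Tn_mul]
  | pred k ih =>
      rw [_root_.zpow_sub_one, ih]
      have : Tm⁻¹ = Tn (-1) := by
        rw [Tm_eq]
        rw [inv_eq_iff_mul_eq_one, Tn_mul]
        apply SL2_ext; intro i j; fin_cases i <;> fin_cases j <;> simp [Tn]
      rw [this, Tn_mul]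
      ring_nf

lemma Tm_inv_eq : Tm⁻¹ = Tn (-1) := by
  rw [show Tm⁻¹ = Tm ^ (-1 : ℤ) by simp, Tm_zpow]

lemma epsConj_Tn (n : ℤ) : epsConj (Tn n) = Tn (-n) := by
  apply SL2_ext
  intro i j
  fin_cases i <;> fin_cases j <;> simp [epsConj, Tn]

def negOne : SL2Z := ⟨!![-1, 0; 0, -1], by simp [Matrix.det_fin_two_of]⟩

lemma negOne_mem_Gamma0 (N : ℕ) : negOne ∈ Gamma0 N := by
  rw [Gamma0_mem]
  show (((negOne.1 1 0 : ℤ)) : ZMod N) = 0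
  simp [negOne]

lemma negSL_eq (A : SL2Z) : negSL A = negOne * A := by
  apply SL2_ext
  intro i j
  have : (negSL A).1 = -A.1 := rfl
  fin_cases i <;> fin_cases j <;> simp only [entry_mul] <;> simp [this, negOne]

lemma Sm_mul_Sm : Sm * Sm = negOne := by
  apply SL2_ext
  intro i j
  fin_cases i <;> fin_cases j <;> simp only [entry_mul] <;> simp [Sm, negOne]

lemma epsConj_A_Sm (A : SL2Z) : epsConj A * Sm⁻¹ = epsConj (A * Sm) := by
  rw [epsConj_mul]
  congr 1
  rw [inv_eq_iff_mul_eq_one]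
  apply SL2_ext
  intro i j
  fin_cases i <;> fin_cases j <;> simp only [entry_mul] <;> simp [epsConj, Sm]

-- coset criterion
lemma mem_Gamma0_row {N : ℕ} {B : SL2Z}
    (h : ((B.1 1 0 : ℤ) : ZMod N) = 0) : B ∈ Gamma0 N := by
  rw [Gamma0_mem]
  exact h

lemma coset_of_rows {N : ℕ} (B C : SL2Z)
    (h : (N : ℤ) ∣ (B.1 1 0 * C.1 1 1 - B.1 1 1 * C.1 1 0)) :
    ∃ γ ∈ Gamma0 N, B = γ * C := by
  refine ⟨B * C⁻¹, ?_, by group⟩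
  apply mem_Gamma0_row
  have he : (B * C⁻¹).1 1 0 = B.1 1 0 * C.1 1 1 - B.1 1 1 * C.1 1 0 := by
    rw [entry_mul, inv_entries]
    simp
    ring
  rw [he]
  exact (ZMod.intCast_zmod_eq_zero_iff_dvd _ _).mpr h

-- polynomial lemmas
lemma pSlash_C_Tm (w : ℕ) (a : ℂ) : pSlash w (C a) Tm = C a := by
  unfold pSlash
  rw [Finset.sum_eq_single 0]
  · have h0 : mc Tm 1 0 = 0 := by norm_num [mc, Tm]
    have h1 : mc Tm 1 1 = 1 := by norm_num [mc, Tm]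
    rw [h0, h1]
    simp
  · intro n _ hn
    rw [Polynomial.coeff_C, if_neg hn]
    simp
  · intro h
    exact absurd (Finset.mem_range.mpr (by omega)) h

lemma pSlash_C_Sm (w : ℕ) (a : ℂ) : pSlash w (C a) Sm = C a * X ^ w := by
  unfold pSlash
  rw [Finset.sum_eq_single 0]
  · have h0 : mc Sm 1 0 = 1 := by norm_num [mc, Sm]
    have h1 : mc Sm 1 1 = 0 := by norm_num [mc, Sm]
    rw [h0, h1]
    simp
  · intro n _ hn
    rw [Polynomial.coeff_C, if_neg hn]
    simp
  · intro h
    exact absurd (Finset.mem_range.mpr (by omega)) h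

lemma pSlash_Tm (w : ℕ) (p : Polynomial ℂ) (hp : p.natDegree ≤ w) :
    pSlash w p Tm = p.comp (X + 1) := by
  unfold pSlash
  have h00 : mc Tm 0 0 = 1 := by norm_num [mc, Tm]
  have h01 : mc Tm 0 1 = 1 := by norm_num [mc, Tm]
  have h10 : mc Tm 1 0 = 0 := by norm_num [mc, Tm]
  have h11 : mc Tm 1 1 = 1 := by norm_num [mc, Tm]
  rw [h00, h01, h10, h11]
  rw [Polynomial.comp, Polynomial.eval₂_eq_sum,
    Polynomial.sum_over_range' (n := w + 1) _ (by intro n; simp) (by omega)]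
  apply Finset.sum_congr rfl
  intro n _
  simp

lemma periodic_poly (p : Polynomial ℂ) (N : ℕ) (hN : 1 ≤ N)
    (h : p.comp (X + C (N : ℂ)) = p) : p = C (p.eval 0) := by
  have hfun : ∀ x : ℂ, p.eval (x + N) = p.eval x := by
    intro x
    conv_rhs => rw [← h]
    rw [Polynomial.eval_comp]
    simp
  have hj : ∀ j : ℕ, p.eval ((j : ℂ) * N) = p.eval 0 := by
    intro j
    induction j with
    | zero => simp
    | succ n ih =>
        have : ((n + 1 : ℕ) : ℂ) * N = (n : ℂ) * N + N := by push_cast; ring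
        rw [this, hfun, ih]
  have hq : p - C (p.eval 0) = 0 := by
    apply Polynomial.eq_zero_of_infinite_isRoot
    apply Set.Infinite.mono (s := Set.range (fun j : ℕ => (j : ℂ) * N))
    · rintro x ⟨j, rfl⟩
      simp [Polynomial.IsRoot, hj j]
    · apply Set.infinite_range_of_injective
      intro a b hab
      have hNne : (N : ℂ) ≠ 0 := by
        simp only [ne_eq, Nat.cast_eq_zero]; omega
      field_simp at hab
      exact_mod_cast hab
  linear_combination (norm := ring_nf) hq

lemma P_const {N : ℕ} (hN : 1 ≤ N) {w : ℕ} {P : SL2Z → Polynomial ℂ}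
    (hPV : MemV (Gamma0 N) w P) (hPT : ∀ A, famSlash w P Tm A = P A) :
    ∀ B, P B = C ((P B).eval 0) := by
  have base : ∀ B, P B = (P (B * Tm⁻¹)).comp (X + 1) := by
    intro B
    rw [← hPT B]
    unfold famSlash
    rw [pSlash_Tm]
    exact Polynomial.natDegree_le_iff_degree_le.mpr (hPV.deg _)
  have iter : ∀ j : ℕ, ∀ B, P B = (P (B * Tm⁻¹ ^ j)).comp (X + C (j : ℂ)) := by
    intro j
    induction j with
    | zero => intro B; simp
    | succ n ih =>
        intro B
        rw [ih B, base (B * Tm⁻¹ ^ n), mul_assoc, ← pow_succ]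
        rw [Polynomial.comp_assoc]
        congr 1
        push_cast
        simp [Polynomial.add_comp]
        ring
  intro B
  have hrel := iter N B
  have hco : P (B * Tm⁻¹ ^ N) = P B := by
    have hT : Tm⁻¹ ^ N = Tn (-(N : ℤ)) := by
      rw [inv_pow, ← zpow_natCast Tm N, ← _root_.zpow_neg, Tm_zpow]
    obtain ⟨γ, hγ, hBγ⟩ := coset_of_rows (N := N) (B * Tm⁻¹ ^ N) B (by
      rw [hT]
      have e10 : (B * Tn (-(N:ℤ))).1 1 0 = B.1 1 0 := by
        rw [entry_mul]; simp [Tn]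
      have e11 : (B * Tn (-(N:ℤ))).1 1 1 = B.1 1 0 * (-(N:ℤ)) + B.1 1 1 := by
        rw [entry_mul]; simp [Tn]
      rw [e10, e11]
      exact ⟨(B.1 1 0)^2, by ring⟩)
    rw [hBγ, hPV.inv γ hγ]
  rw [hco] at hrel
  exact periodic_poly _ N hN hrel.symm


def Good (N : ℕ) : Prop := ∃ e N' : ℕ, N = 2 ^ e * N' ∧ Odd N' ∧ Squarefree N' ∧ e ≤ 3

lemma good_gcd {N : ℕ} (hN : 1 ≤ N) (hG : Good N) (m : ℕ) (hm : m ≠ 0) :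
    Nat.gcd (m ^ 2) N ∣ 2 * m := by
  obtain ⟨e, N', hN', hodd, hsq, he⟩ := hG
  have hN0 : N ≠ 0 := by omega
  have hN'0 : N' ≠ 0 := by rintro rfl; simp at hN'; omega
  rw [← Nat.factorization_le_iff_dvd (Nat.gcd_ne_zero_right hN0) (by omega)]
  rw [Nat.factorization_gcd (pow_ne_zero 2 hm) hN0]
  intro p
  rw [Finsupp.inf_apply, Nat.factorization_pow, Nat.factorization_mul (by norm_num) hm]
  simp only [Finsupp.smul_apply, Finsupp.coe_add, Pi.add_apply, smul_eq_mul]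
  have hNf : N.factorization p = e * Nat.factorization 2 p + N'.factorization p := by
    rw [hN', Nat.factorization_mul (by positivity) hN'0, Nat.factorization_pow]
    simp
  have hsq' : N'.factorization p ≤ 1 :=
    (Nat.squarefree_iff_factorization_le_one hN'0).mp hsq p
  by_cases hp : p = 2
  · subst hp
    have h2 : Nat.factorization 2 2 = 1 := by
      simp [Nat.Prime.factorization Nat.prime_two]
    have hN'2 : N'.factorization 2 = 0 :=
      Nat.factorization_eq_zero_of_not_dvd (by
        intro h2d
        exact (Nat.not_even_iff_odd.mpr hodd) ((even_iff_two_dvd (α := ℕ)).mpr h2d))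
    rw [hNf, h2, hN'2]
    omega
  · have h2 : Nat.factorization 2 p = 0 := by
      rw [Nat.Prime.factorization Nat.prime_two, Finsupp.single_apply]
      simp [Ne.symm hp]
    rw [hNf, h2]
    omega

lemma not_good_gcd {N : ℕ} (hN : 1 ≤ N) (hG : ¬ Good N) :
    ∃ m : ℕ, m ≠ 0 ∧ ¬ Nat.gcd (m ^ 2) N ∣ 2 * m := by
  have hN0 : N ≠ 0 := by omega
  set e := N.factorization 2 with hedef
  set N' := ordCompl[2] N with hN'def
  have hdecomp : N = 2 ^ e * N' := (Nat.ordProj_mul_ordCompl_eq_self N 2).symm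
  have hN'0 : N' ≠ 0 := Nat.ordCompl_pos 2 hN0 |>.ne'
  have hodd : Odd N' := by
    rw [← Nat.not_even_iff_odd, even_iff_two_dvd]
    exact Nat.not_dvd_ordCompl Nat.prime_two hN0
  by_cases hsq : Squarefree N'
  · -- then e ≥ 4 forced
    have he : ¬ e ≤ 3 := by
      intro he'
      exact hG ⟨e, N', hdecomp, hodd, hsq, he'⟩
    refine ⟨4, by norm_num, ?_⟩
    have h16 : (16 : ℕ) ∣ N := by
      calc (16 : ℕ) = 2 ^ 4 := by norm_num
      _ ∣ 2 ^ e := pow_dvd_pow 2 (by omega)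
      _ ∣ N := Nat.ordProj_dvd N 2
    have : Nat.gcd (4 ^ 2) N = 16 := by
      rw [show (4:ℕ)^2 = 16 by norm_num, Nat.gcd_eq_left h16]
    rw [this]
    norm_num
  · obtain ⟨p, hp, hpd⟩ := by
      have := (Nat.squarefree_iff_prime_squarefree (n := N')).not.mp hsq
      push_neg at this
      exact this
    have hp2 : p ≠ 2 := by
      rintro rfl
      exact (Nat.not_even_iff_odd.mpr hodd) ((even_iff_two_dvd (α := ℕ)).mpr
        (dvd_trans (dvd_mul_right 2 2) hpd))
    refine ⟨p, hp.ne_zero, ?_⟩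
    have hpN : p ^ 2 ∣ N := by
      rw [hdecomp]; exact Dvd.dvd.mul_left (by rwa [pow_two]) _
    rw [Nat.gcd_eq_left hpN]
    intro hdvd
    rw [pow_two] at hdvd
    rw [mul_comm 2 p] at hdvd
    have hp2' : p ∣ 2 := (Nat.mul_dvd_mul_iff_left hp.pos).mp hdvd
    have := (Nat.prime_dvd_prime_iff_eq hp Nat.prime_two).mp hp2'
    exact hp2 this

lemma exists_n {N : ℕ} (hN : 1 ≤ N) (hG : Good N) (c d : ℤ) :
    ∃ n : ℤ, (N : ℤ) ∣ c * c * n + 2 * c * d := by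
  by_cases hc : c = 0
  · exact ⟨0, by simp [hc]⟩
  have hg : (Int.gcd (c ^ 2) N : ℤ) ∣ 2 * c * d := by
    have hnat : Nat.gcd (c.natAbs ^ 2) N ∣ 2 * c.natAbs :=
      good_gcd hN hG _ (Int.natAbs_ne_zero.mpr hc)
    have h1 : Int.gcd (c ^ 2) N = Nat.gcd (c.natAbs ^ 2) N := by
      simp [Int.gcd, Int.natAbs_pow]
    have h2 : (Int.gcd (c ^ 2) N : ℤ) ∣ ((2 * c.natAbs : ℕ) : ℤ) := by
      rw [h1]; exact_mod_cast hnat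
    have h3 : ((2 * c.natAbs : ℕ) : ℤ) = ((2 * c).natAbs : ℤ) := by
      rw [Int.natAbs_mul]; simp
    rw [h3] at h2
    exact dvd_mul_of_dvd_left (Int.dvd_natAbs.mp h2) d
  obtain ⟨t, ht⟩ := hg
  refine ⟨-(Int.gcdA (c ^ 2) N * t), Int.gcdB (c ^ 2) N * t, ?_⟩
  have hb := Int.gcd_eq_gcd_ab (c ^ 2) (N : ℤ)
  linear_combination ht + t * hb

lemma eps_fixed {N : ℕ} (hN : 1 ≤ N) (hG : Good N) (A : SL2Z) :
    ∃ γ ∈ Gamma0 N, ∃ n : ℤ, epsConj A = γ * (A * Tn n) := by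
  obtain ⟨n, hn⟩ := exists_n hN hG (A.1 1 0) (A.1 1 1)
  obtain ⟨γ, hγ, hB⟩ := coset_of_rows (N := N) (epsConj A) (A * Tn n) (by
    have e0 : (epsConj A).1 1 0 = -(A.1 1 0) := by simp [epsConj]
    have e1 : (epsConj A).1 1 1 = A.1 1 1 := by simp [epsConj]
    have f0 : (A * Tn n).1 1 0 = A.1 1 0 := by rw [entry_mul]; simp [Tn]
    have f1 : (A * Tn n).1 1 1 = A.1 1 0 * n + A.1 1 1 := by rw [entry_mul]; simp [Tn]
    rw [e0, e1, f0, f1]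
    obtain ⟨u, hu⟩ := hn
    exact ⟨-u, by linear_combination -hu⟩)
  exact ⟨γ, hγ, n, hB⟩

lemma negOne_comm (B : SL2Z) : negOne * B = B * negOne := by
  apply SL2_ext
  intro i j
  fin_cases i <;> fin_cases j <;> simp only [entry_mul] <;> simp [negOne]

lemma dir_good {N : ℕ} (hN : 1 ≤ N) (hG : Good N) {w : ℕ} (hwe : Even w)
    (Q : SL2Z → Polynomial ℂ) (hQ : MemC (Gamma0 N) w Q)
    (heps : ∀ A, epsAct w Q A = -Q A) : ∀ A, Q A = 0 := by
  obtain ⟨P, hPV, hPT, hQeq⟩ := hQ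
  have hconst := P_const hN hPV hPT
  set c : SL2Z → ℂ := fun B => (P B).eval 0 with hcdef
  have hcγ : ∀ γ ∈ Gamma0 N, ∀ B, c (γ * B) = c B := by
    intro γ hγ B
    simp only [hcdef, hPV.inv γ hγ]
  have hQform : ∀ A, Q A = C (c A) - C (c (A * Sm⁻¹)) * X ^ w := by
    intro A
    rw [hQeq A]
    unfold famSlash
    rw [hconst (A * Sm⁻¹), pSlash_C_Sm, hconst A]
  have hfix : ∀ A, c (epsConj A) = c A := by
    intro A
    obtain ⟨γ, hγ, n, hB⟩ := eps_fixed hN hG A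
    rw [hB, hcγ γ hγ]
    have hT : ∀ B : SL2Z, ∀ n : ℤ, c (B * Tn n) = c B := by
      have h1 : ∀ B : SL2Z, c (B * Tn (-1)) = c B := by
        intro B
        have hb := hPT B
        unfold famSlash at hb
        rw [hconst (B * Tm⁻¹), pSlash_C_Tm] at hb
        rw [← Tm_inv_eq]
        calc c (B * Tm⁻¹) = (C (c (B * Tm⁻¹))).eval 0 := by simp
        _ = (P B).eval 0 := by rw [hb]
      have hTn0 : Tn 0 = 1 := by
        apply SL2_ext; intro i j; fin_cases i <;> fin_cases j <;> simp [Tn]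
      have h2 : ∀ B : SL2Z, c (B * Tn 1) = c B := by
        intro B
        have h3 := h1 (B * Tn 1)
        rw [mul_assoc, Tn_mul, show (1:ℤ) + -1 = 0 by ring, hTn0, mul_one] at h3
        exact h3.symm
      intro B n
      induction n using Int.induction_on with
      | zero => rw [hTn0, mul_one]
      | succ k ih =>
          have : B * Tn (k + 1) = (B * Tn k) * Tn 1 := by rw [mul_assoc, Tn_mul]
          rw [this, h2, ih]
      | pred k ih =>
          have : B * Tn (-k - 1) = (B * Tn (-k)) * Tn (-1) := by
            rw [mul_assoc, Tn_mul]; ring_nf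
          rw [this, h1, ih]
    exact hT A n
  have hcneg : ∀ B, c (negOne * B) = c B := fun B => hcγ _ (negOne_mem_Gamma0 N) B
  have hSmSm : ∀ A : SL2Z, c (A * Sm) = c (A * Sm⁻¹) := by
    intro A
    have h : A * Sm = negOne * (A * Sm⁻¹) := by
      rw [negOne_comm, ← Sm_mul_Sm]
      group
    rw [h, hcneg]
  have key : ∀ A : SL2Z, c A - c (A * Sm) * (0 : ℂ) ^ w
      = -(c A - c (A * Sm⁻¹) * (0 : ℂ) ^ w) := by
    intro A
    have h := heps A
    unfold epsAct at h
    rw [hQform (epsConj A), hQform A, epsConj_A_Sm] at h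
    have hcomp : (C (c (epsConj A)) - C (c (epsConj (A * Sm))) * X ^ w).comp (-X)
        = C (c (epsConj A)) - C (c (epsConj (A * Sm))) * X ^ w := by
      simp only [Polynomial.sub_comp, Polynomial.C_comp, Polynomial.mul_comp,
        Polynomial.pow_comp, Polynomial.X_comp]
      rw [hwe.neg_pow]
    rw [hcomp, hfix, hfix] at h
    have := congrArg (Polynomial.eval 0) h
    simpa using this
  intro A
  rw [hQform A]
  rcases Nat.eq_zero_or_pos w with hw0 | hwpos
  · subst hw0
    have h := key A
    rw [pow_zero, mul_one, mul_one, hSmSm A] at h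
    have h2 : (2 : ℂ) * (c A - c (A * Sm⁻¹)) = 0 := by linear_combination h
    have h3 : c A = c (A * Sm⁻¹) := by
      have := mul_eq_zero.mp h2
      simp only [OfNat.ofNat_ne_zero, false_or] at this
      linear_combination this
    rw [pow_zero, mul_one, h3, sub_self]
  · have hzero : ∀ B : SL2Z, c B = 0 := by
      intro B
      have h := key B
      rw [zero_pow (Nat.pos_iff_ne_zero.mp hwpos)] at h
      have h2 : (2 : ℂ) * c B = 0 := by linear_combination h
      simpa using h2
    rw [hzero A, hzero (A * Sm⁻¹)]
    simp

lemma Tn_zero : Tn 0 = 1 := by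
  apply SL2_ext; intro i j; fin_cases i <;> fin_cases j <;> simp [Tn]

lemma Tn_inv (n : ℤ) : (Tn n)⁻¹ = Tn (-n) := by
  rw [inv_eq_iff_mul_eq_one, Tn_mul]
  simp [Tn_zero]

/-- the `Γ₀(N)`-cusp-class relation. -/
def Cls (N : ℕ) (B₀ B : SL2Z) : Prop := ∃ γ ∈ Gamma0 N, ∃ n : ℤ, B = γ * B₀ * Tn n

lemma cls_refl (N : ℕ) (B₀ : SL2Z) : Cls N B₀ B₀ :=
  ⟨1, Subgroup.one_mem _, 0, by rw [Tn_zero]; group⟩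

lemma cls_left {N : ℕ} {γ : SL2Z} (hγ : γ ∈ Gamma0 N) {B₀ B : SL2Z}
    (h : Cls N B₀ B) : Cls N B₀ (γ * B) := by
  obtain ⟨γ₁, h₁, n, rfl⟩ := h
  exact ⟨γ * γ₁, mul_mem hγ h₁, n, by group⟩

lemma cls_left_iff {N : ℕ} {γ : SL2Z} (hγ : γ ∈ Gamma0 N) (B₀ B : SL2Z) :
    Cls N B₀ (γ * B) ↔ Cls N B₀ B := by
  constructor
  · intro h
    have h2 := cls_left (inv_mem hγ) h
    rwa [inv_mul_cancel_left] at h2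
  · exact cls_left hγ

lemma cls_Tn {N : ℕ} {B₀ B : SL2Z} (j : ℤ) (h : Cls N B₀ B) : Cls N B₀ (B * Tn j) := by
  obtain ⟨γ₁, h₁, n, rfl⟩ := h
  exact ⟨γ₁, h₁, n + j, by rw [mul_assoc (γ₁ * B₀), Tn_mul]⟩

lemma cls_Tn_iff {N : ℕ} (B₀ B : SL2Z) (j : ℤ) :
    Cls N B₀ (B * Tn j) ↔ Cls N B₀ B := by
  constructor
  · intro h
    have h2 := cls_Tn (-j) h
    rwa [mul_assoc, Tn_mul, add_neg_cancel, Tn_zero, mul_one] at h2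
  · exact cls_Tn j

lemma cls_eps {N : ℕ} {B₀ B : SL2Z} (h : Cls N B₀ B) :
    Cls N (epsConj B₀) (epsConj B) := by
  obtain ⟨γ₁, h₁, n, rfl⟩ := h
  exact ⟨epsConj γ₁, epsConj_mem_Gamma0 h₁, -n, by
    rw [epsConj_mul, epsConj_mul, epsConj_Tn]⟩

lemma cls_aux {γ₁ γ₂ B₀ B₁ : SL2Z} {n₁ n₂ : ℤ} (h : γ₁ * B₀ * Tn n₁ = γ₂ * B₁ * Tn n₂) :
    B₁ = γ₂⁻¹ * γ₁ * B₀ * Tn (n₁ - n₂) := by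
  have h2 : B₁ = γ₂⁻¹ * (γ₂ * B₁ * Tn n₂) * (Tn n₂)⁻¹ := by group
  rw [h2, ← h, Tn_inv, show n₁ - n₂ = n₁ + -n₂ by ring, ← Tn_mul]
  group

lemma cls_disj {N : ℕ} {A₀ B : SL2Z} (hnf : ¬ Cls N A₀ (epsConj A₀))
    (h1 : Cls N A₀ B) (h2 : Cls N (epsConj A₀) B) : False := by
  obtain ⟨γ₁, hγ₁, n₁, rfl⟩ := h1
  obtain ⟨γ₂, hγ₂, n₂, heq⟩ := h2
  exact hnf ⟨γ₂⁻¹ * γ₁, mul_mem (inv_mem hγ₂) hγ₁, n₁ - n₂, cls_aux heq⟩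

def Amat (m : ℕ) : SL2Z := ⟨!![1, 0; (m : ℤ), 1], by simp [Matrix.det_fin_two_of]⟩

lemma not_fixed {N m : ℕ} (hmg : ¬ Nat.gcd (m ^ 2) N ∣ 2 * m) :
    ¬ Cls N (Amat m) (epsConj (Amat m)) := by
  rintro ⟨γ, hγ, n, heq⟩
  have hγeq : γ = epsConj (Amat m) * Tn (-n) * (Amat m)⁻¹ := by
    have h2 : γ = (γ * Amat m * Tn n) * (Tn n)⁻¹ * (Amat m)⁻¹ := by group
    rw [← heq, Tn_inv] at h2
    exact h2
  have hent : γ.1 1 0 = -((m : ℤ) * m * n + 2 * m) := by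
    rw [hγeq, entry_mul, entry_mul, entry_mul, inv_entries]
    simp [epsConj, Amat, Tn]
    ring
  have hmem : ((γ.1 1 0 : ℤ) : ZMod N) = 0 := Gamma0_mem.mp hγ
  rw [hent] at hmem
  have hdvd : (N : ℤ) ∣ ((m : ℤ) * m * n + 2 * m) := by
    have h6 := (ZMod.intCast_zmod_eq_zero_iff_dvd _ N).mp hmem
    exact Int.dvd_neg.mp h6
  have hg1 : ((Nat.gcd (m ^ 2) N : ℕ) : ℤ) ∣ ((m : ℤ) * m * n + 2 * m) :=
    dvd_trans (Int.natCast_dvd_natCast.mpr (Nat.gcd_dvd_right _ _)) hdvd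
  have hg2 : ((Nat.gcd (m ^ 2) N : ℕ) : ℤ) ∣ (m : ℤ) * m * n := by
    apply dvd_mul_of_dvd_left
    have : ((Nat.gcd (m ^ 2) N : ℕ) : ℤ) ∣ ((m ^ 2 : ℕ) : ℤ) :=
      Int.natCast_dvd_natCast.mpr (Nat.gcd_dvd_left _ _)
    calc ((Nat.gcd (m ^ 2) N : ℕ) : ℤ) ∣ ((m ^ 2 : ℕ) : ℤ) := this
    _ = (m : ℤ) * m := by push_cast; ring
  have hg3 : ((Nat.gcd (m ^ 2) N : ℕ) : ℤ) ∣ ((2 * m : ℕ) : ℤ) := by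
    have h4 := dvd_sub hg1 hg2
    have h5 : (m : ℤ) * m * n + 2 * m - (m : ℤ) * m * n = ((2 * m : ℕ) : ℤ) := by
      push_cast; ring
    rwa [h5] at h4
  exact hmg (Int.natCast_dvd_natCast.mp hg3)

lemma Amat_word (m : ℕ) : Amat m = Sm⁻¹ * Tn (-(m : ℤ)) * Sm := by
  apply SL2_ext
  intro i j
  fin_cases i <;> fin_cases j <;>
    simp only [entry_mul, inv_entries] <;> simp [Sm, Tn, Amat]

lemma Amat_eps_word (m : ℕ) : epsConj (Amat m) = Sm⁻¹ * Tn ((m : ℤ)) * Sm := by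
  apply SL2_ext
  intro i j
  fin_cases i <;> fin_cases j <;>
    simp only [entry_mul, inv_entries] <;> simp [Sm, Tn, Amat, epsConj]

open scoped Classical in
/-- the ± cusp-class indicator function. -/
noncomputable def cf (N m : ℕ) : SL2Z → ℂ := fun B =>
  if Cls N (Amat m) B then 1 else if Cls N (epsConj (Amat m)) B then -1 else 0


lemma cf_congr {N m : ℕ} {B B' : SL2Z}
    (h1 : Cls N (Amat m) B ↔ Cls N (Amat m) B')
    (h2 : Cls N (epsConj (Amat m)) B ↔ Cls N (epsConj (Amat m)) B') :
    cf N m B = cf N m B' := by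
  rw [cf, cf]
  by_cases hA : Cls N (Amat m) B'
  · rw [if_pos (h1.mpr hA), if_pos hA]
  · rw [if_neg (fun h => hA (h1.mp h)), if_neg hA]
    by_cases hE : Cls N (epsConj (Amat m)) B'
    · rw [if_pos (h2.mpr hE), if_pos hE]
    · rw [if_neg (fun h => hE (h2.mp h)), if_neg hE]

lemma cf_A0 (N m : ℕ) : cf N m (Amat m) = 1 := by
  rw [cf, if_pos (cls_refl N (Amat m))]

lemma cf_E0 {N m : ℕ} (hnf : ¬ Cls N (Amat m) (epsConj (Amat m))) :
    cf N m (epsConj (Amat m)) = -1 := by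
  rw [cf, if_neg hnf, if_pos (cls_refl N (epsConj (Amat m)))]

lemma cf_left {N m : ℕ} {γ : SL2Z} (hγ : γ ∈ Gamma0 N) (B : SL2Z) :
    cf N m (γ * B) = cf N m B := by
  exact cf_congr (cls_left_iff hγ _ B) (cls_left_iff hγ _ B)

lemma cf_Tn {N m : ℕ} (B : SL2Z) (j : ℤ) : cf N m (B * Tn j) = cf N m B := by
  exact cf_congr (cls_Tn_iff _ B j) (cls_Tn_iff _ B j)

lemma cf_eps {N m : ℕ} (hnf : ¬ Cls N (Amat m) (epsConj (Amat m))) (B : SL2Z) :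
    cf N m (epsConj B) = - cf N m B := by
  by_cases h1 : Cls N (Amat m) B
  · have h2 : Cls N (epsConj (Amat m)) (epsConj B) := cls_eps h1
    have h3 : ¬ Cls N (Amat m) (epsConj B) := fun h => cls_disj hnf h h2
    rw [cf, cf, if_pos h1, if_neg h3, if_pos h2]
  · by_cases h4 : Cls N (epsConj (Amat m)) B
    · have h5 : Cls N (Amat m) (epsConj B) := by
        have h6 := cls_eps h4
        rwa [epsConj_epsConj] at h6
      rw [cf, cf, if_neg h1, if_pos h4, if_pos h5]
      norm_num
    · have h6 : ¬ Cls N (Amat m) (epsConj B) := fun h => by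
        have h7 := cls_eps h
        rw [epsConj_epsConj] at h7
        exact h4 h7
      have h7 : ¬ Cls N (epsConj (Amat m)) (epsConj B) := fun h => by
        have h8 := cls_eps h
        rw [epsConj_epsConj, epsConj_epsConj] at h8
        exact h1 h8
      rw [cf, cf, if_neg h1, if_neg h4, if_neg h6, if_neg h7]
      ring

lemma dir_bad {N : ℕ} (hN : 1 ≤ N) (hG : ¬ Good N) {w : ℕ} (hwe : Even w) :
    ∃ Q : SL2Z → Polynomial ℂ, MemC (Gamma0 N) w Q ∧
      (∀ A, epsAct w Q A = -Q A) ∧ ¬ (∀ A, Q A = 0) := by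
  obtain ⟨m, hm0, hmg⟩ := not_good_gcd hN hG
  have hnf := not_fixed hmg
  set P : SL2Z → Polynomial ℂ := fun B => C (cf N m B) with hP
  have hMemV : MemV (Gamma0 N) w P := by
    constructor
    · intro A
      exact le_trans Polynomial.degree_C_le (by exact_mod_cast Nat.zero_le w)
    · intro γ hγ A
      simp only [hP]
      rw [cf_left hγ A]
    · intro A
      simp only [hP]
      rw [negSL_eq, cf_left (negOne_mem_Gamma0 N), hwe.neg_one_pow, one_smul]
  have hPT : ∀ A, famSlash w P Tm A = P A := by
    intro A
    show pSlash w (P (A * Tm⁻¹)) Tm = P A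
    simp only [hP]
    rw [pSlash_C_Tm, Tm_inv_eq, cf_Tn]
  refine ⟨fun A => P A - famSlash w P Sm A, ⟨P, hMemV, hPT, fun A => rfl⟩, ?_, ?_⟩
  case refine_1 =>
    have hQform : ∀ A : SL2Z, P A - famSlash w P Sm A
        = C (cf N m A) - C (cf N m (A * Sm⁻¹)) * X ^ w := by
      intro A
      show P A - pSlash w (P (A * Sm⁻¹)) Sm = _
      simp only [hP]
      rw [pSlash_C_Sm]
    intro A
    show (P (epsConj A) - famSlash w P Sm (epsConj A)).comp (-X)
      = -(P A - famSlash w P Sm A)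
    rw [hQform (epsConj A), hQform A]
    have hE : cf N m (epsConj A * Sm⁻¹) = cf N m (epsConj (A * Sm)) := by
      rw [epsConj_A_Sm]
    rw [hE]
    simp only [Polynomial.sub_comp, Polynomial.C_comp, Polynomial.mul_comp,
      Polynomial.pow_comp, Polynomial.X_comp]
    rw [hwe.neg_pow, cf_eps hnf A, cf_eps hnf (A * Sm)]
    have hSmSm : cf N m (A * Sm) = cf N m (A * Sm⁻¹) := by
      have h : A * Sm = negOne * (A * Sm⁻¹) := by
        rw [negOne_comm, ← Sm_mul_Sm]
        group
      rw [h, cf_left (negOne_mem_Gamma0 N)]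
    rw [hSmSm]
    simp only [map_neg]
    ring
  case refine_2 =>
    intro hzero
    have hQform : ∀ A : SL2Z, P A - famSlash w P Sm A
        = C (cf N m A) - C (cf N m (A * Sm⁻¹)) * X ^ w := by
      intro A
      show P A - pSlash w (P (A * Sm⁻¹)) Sm = _
      simp only [hP]
      rw [pSlash_C_Sm]
    rcases Nat.eq_zero_or_pos w with hw0 | hwpos
    · subst hw0
      have hSinv : ∀ B : SL2Z, cf N m (B * Sm⁻¹) = cf N m B := by
        intro B
        have h : P B - famSlash 0 P Sm B = 0 := hzero B
        rw [hQform B, pow_zero, mul_one, ← Polynomial.C_sub] at h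
        have h2 := Polynomial.C_eq_zero.mp h
        linear_combination -h2
      have hSinv' : ∀ B : SL2Z, cf N m (B * Sm) = cf N m B := by
        intro B
        have h := hSinv (B * Sm)
        rw [mul_assoc, mul_inv_cancel, mul_one] at h
        exact h.symm
      have e1 : cf N m (Amat m) = cf N m 1 := by
        rw [Amat_word, hSinv' (Sm⁻¹ * Tn (-(m : ℤ))), cf_Tn]
        have h := hSinv 1
        rwa [one_mul] at h
      have e2 : cf N m (epsConj (Amat m)) = cf N m 1 := by
        rw [Amat_eps_word, hSinv' (Sm⁻¹ * Tn ((m : ℤ))), cf_Tn]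
        have h := hSinv 1
        rwa [one_mul] at h
      rw [cf_A0] at e1
      rw [cf_E0 hnf] at e2
      have h12 : (1 : ℂ) = -1 := e1.trans e2.symm
      norm_num at h12
    · have h : P (Amat m) - famSlash w P Sm (Amat m) = 0 := hzero (Amat m)
      rw [hQform (Amat m), cf_A0] at h
      have h2 := congrArg (Polynomial.eval 0) h
      simp only [Polynomial.eval_sub, Polynomial.eval_mul, Polynomial.eval_C,
        Polynomial.eval_pow, Polynomial.eval_X, Polynomial.eval_zero,
        zero_pow hwpos.ne', mul_zero, sub_zero] at h2
      exact one_ne_zero h2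

/-- for `Γ = Γ₀(N)` and `k` even, `(C_w^Γ)⁻ = {0}` if and only if
`N = 2^e N'` with `N'` odd squarefree and `0 ≤ e ≤ 3`. -/
theorem statement10 (N : ℕ) (hN : 1 ≤ N) (k : ℤ) (hk : 2 ≤ k) (hke : Even k)
    (w : ℕ) (hw : (w : ℤ) = k - 2) :
    (∀ Q : SL2Z → Polynomial ℂ, MemC (CongruenceSubgroup.Gamma0 N) w Q →
        (∀ A, epsAct w Q A = -Q A) → ∀ A, Q A = 0) ↔
      ∃ e N' : ℕ, N = 2 ^ e * N' ∧ Odd N' ∧ Squarefree N' ∧ e ≤ 3 := by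
  have hwe : Even w := by
    have h1 : Even ((w : ℤ)) := by
      rw [hw]
      exact hke.sub even_two
    exact (Int.even_coe_nat w).mp h1
  constructor
  · intro hLHS
    by_contra hG
    obtain ⟨Q, hQC, hqe, hnz⟩ := dir_bad hN hG hwe
    exact hnz (hLHS Q hQC hqe)
  · intro hG Q hQC heps
    exact dir_good hN hG hwe Q hQC heps

end
end
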